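/- arXiv:1406.0230 — 3 statements merged into one kernel-verified Lean document; each statement's English description precedes it below -/
import Mathlib

section
/- Let f be a right-continuous function on [0,1]^d of bounded HK-variation, and let f(x)=f(0)+f^+(x)−f^-(x) be its Jordan decomposition. Then the functions f^+ and f^- are right-continuous. -/
open MeasureTheory Finset

noncomputable section

/-- The quasi-volume `Δ` of `f` over the box `[a,b]` in the coordinates of `S`;
the coordinates outside `S` are fixed according to the anchor point `p`. -/
def quasiVol {d : ℕ} (f : (Fin d → ℝ) → ℝ) (S : Finset (Fin d)) (p a b : Fin d → ℝ) : ℝ :=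
  ∑ T ∈ S.powerset, (-1 : ℝ) ^ T.card *
    f (fun i => if i ∈ S then (if i ∈ T then a i else b i) else p i)

/-- A grid (a partition generated by one-dimensional partitions of the sides) of the
box `[lo, hi]` in the coordinates of `S`. -/
structure Grid (d : ℕ) (S : Finset (Fin d)) (lo hi : Fin d → ℝ) where
  m : Fin d → ℕ
  t : Fin d → ℕ → ℝ
  mono : ∀ i ∈ S, ∀ j k : ℕ, j ≤ k → k ≤ m i → t i j ≤ t i k
  first : ∀ i ∈ S, t i 0 = lo i
  last : ∀ i ∈ S, t i (m i) = hi i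

/-- The sum, over all cells of a grid, of the absolute value of the quasi-volume of the cell. -/
def gridSum {d : ℕ} (f : (Fin d → ℝ) → ℝ) (S : Finset (Fin d)) (p lo hi : Fin d → ℝ)
    (G : Grid d S lo hi) : ℝ :=
  ∑ k ∈ Fintype.piFinset (fun i => Finset.range (if i ∈ S then G.m i else 1)),
    |quasiVol f S p (fun i => G.t i (k i)) (fun i => G.t i (k i + 1))|

/-- The variation in the sense of Vitali of `f` on the face of the box `[lo, hi]` with active
coordinates `S`, the remaining coordinates being fixed according to the anchor `p`:
the supremum of `gridSum` over all grids. -/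
def vitaliVar {d : ℕ} (f : (Fin d → ℝ) → ℝ) (S : Finset (Fin d)) (p lo hi : Fin d → ℝ) : ℝ :=
  sSup (Set.range (gridSum f S p lo hi))

/-- The Vitali variation on the face `(S, p)` of `[lo, hi]` is bounded (finite). -/
def BddVitali {d : ℕ} (f : (Fin d → ℝ) → ℝ) (S : Finset (Fin d)) (p lo hi : Fin d → ℝ) : Prop :=
  BddAbove (Set.range (gridSum f S p lo hi))

/-- Hardy–Krause-type variation of `f` on the box `[lo, hi]` with anchor `p`: the sum, over all
nonempty sets `S` of coordinates, of the Vitali variation of the restriction of `f` to the face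
of `[lo, hi]` whose coordinates outside `S` are fixed according to `p`. -/
def hkVarOn {d : ℕ} (f : (Fin d → ℝ) → ℝ) (p lo hi : Fin d → ℝ) : ℝ :=
  ∑ S ∈ (Finset.univ : Finset (Fin d)).powerset.erase ∅, vitaliVar f S p lo hi

/-- All the Vitali variations occurring in `hkVarOn` are bounded. -/
def BddHKVarOn {d : ℕ} (f : (Fin d → ℝ) → ℝ) (p lo hi : Fin d → ℝ) : Prop :=
  ∀ S ∈ (Finset.univ : Finset (Fin d)).powerset.erase ∅, BddVitali f S p lo hi

/-- The Hardy–Krause variation of `f` on `[0,1]^d`, anchored at `1`. -/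
def hkVar {d : ℕ} (f : (Fin d → ℝ) → ℝ) : ℝ := hkVarOn f 1 0 1

/-- `f` has bounded Hardy–Krause variation (anchored at `1`). -/
def BddHKVar {d : ℕ} (f : (Fin d → ℝ) → ℝ) : Prop := BddHKVarOn f 1 0 1

/-- The Hardy–Krause variation of `f` on the box `[0, a]`, anchored at `0`. -/
def hkVar0On {d : ℕ} (f : (Fin d → ℝ) → ℝ) (a : Fin d → ℝ) : ℝ := hkVarOn f 0 0 a

/-- The Hardy–Krause variation of `f` on `[0,1]^d`, anchored at `0`. -/
def hkVar0 {d : ℕ} (f : (Fin d → ℝ) → ℝ) : ℝ := hkVarOn f 0 0 1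

/-- `f` has bounded Hardy–Krause variation anchored at `0`. -/
def BddHKVar0 {d : ℕ} (f : (Fin d → ℝ) → ℝ) : Prop := BddHKVarOn f 0 0 1

/-- `f` is completely monotone: every quasi-volume of an axis-parallel box contained in a face
of `[0,1]^d` (coordinates outside the active set `S` being fixed at `0` or `1`) is nonnegative. -/
def CompletelyMonotone {d : ℕ} (f : (Fin d → ℝ) → ℝ) : Prop :=
  ∀ S : Finset (Fin d), S.Nonempty → ∀ p : Fin d → ℝ, (∀ i ∉ S, p i = 0 ∨ p i = 1) →
    ∀ a b : Fin d → ℝ, a ∈ Set.Icc (0 : Fin d → ℝ) 1 → b ∈ Set.Icc (0 : Fin d → ℝ) 1 →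
      a ≤ b → 0 ≤ quasiVol f S p a b

/-- `f` is coordinatewise right-continuous at every point of `[0,1]^d`. -/
def RightCts {d : ℕ} (f : (Fin d → ℝ) → ℝ) : Prop :=
  ∀ x ∈ Set.Icc (0 : Fin d → ℝ) 1, ∀ i : Fin d,
    Filter.Tendsto (fun y : ℝ => f (Function.update x i y))
      (nhdsWithin (x i) (Set.Icc (x i) 1)) (nhds (f x))

/-- The star-discrepancy of the points `x 1, …, x N` with respect to the measure `μ`. -/
def starDisc {d : ℕ} (N : ℕ) (x : Fin N → Fin d → ℝ) (μ : Measure (Fin d → ℝ)) : ℝ :=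
  ⨆ a : Set.Icc (0 : Fin d → ℝ) 1,
    |(∑ n : Fin N, Set.indicator (Set.Icc 0 (a : Fin d → ℝ)) (fun _ => (1 : ℝ)) (x n)) / N
      - (μ (Set.Icc 0 (a : Fin d → ℝ))).toReal|

namespace HK
open Finset

variable {d : ℕ}

lemma quasiVol_congr (f : (Fin d → ℝ) → ℝ) (S : Finset (Fin d)) {p p' a a' b b' : Fin d → ℝ}
    (hp : ∀ i ∉ S, p i = p' i) (ha : ∀ i ∈ S, a i = a' i) (hb : ∀ i ∈ S, b i = b' i) :
    quasiVol f S p a b = quasiVol f S p' a' b' := by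
  unfold quasiVol
  refine Finset.sum_congr rfl fun T hT => ?_
  rw [Finset.mem_powerset] at hT
  congr 1
  congr 1
  funext i
  by_cases hiS : i ∈ S
  · simp only [hiS, if_true]
    by_cases hiT : i ∈ T
    · simp [hiT, ha i hiS]
    · simp [hiT, hb i hiS]
  · simp [hiS, hp i hiS]

lemma quasiVol_empty (f : (Fin d → ℝ) → ℝ) (p a b : Fin d → ℝ) :
    quasiVol f ∅ p a b = f p := by
  simp [quasiVol]

/-- Peeling one coordinate off a quasi-volume. -/
lemma quasiVol_peel (f : (Fin d → ℝ) → ℝ) {S : Finset (Fin d)} {i : Fin d} (hi : i ∈ S)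
    (p a b : Fin d → ℝ) :
    quasiVol f S p a b =
      quasiVol f (S.erase i) (Function.update p i (b i)) a b
        - quasiVol f (S.erase i) (Function.update p i (a i)) a b := by
  have hS : S = insert i (S.erase i) := (Finset.insert_erase hi).symm
  have hie : i ∉ S.erase i := Finset.notMem_erase i S
  unfold quasiVol
  conv_lhs => rw [hS, Finset.sum_powerset_insert hie]
  have h1 : ∀ T ∈ (S.erase i).powerset,
      (-1 : ℝ) ^ T.card *
        f (fun j => if j ∈ insert i (S.erase i) then (if j ∈ T then a j else b j)
            else p j)
      = (-1 : ℝ) ^ T.card *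
        f (fun j => if j ∈ S.erase i then (if j ∈ T then a j else b j)
            else Function.update p i (b i) j) := by
    intro T hT
    rw [Finset.mem_powerset] at hT
    congr 1; congr 1; funext j
    by_cases hji : j = i
    · subst hji
      have hjT : j ∉ T := fun h => hie (hT h)
      simp [hie, hjT, Function.update_self]
    · by_cases hjS : j ∈ S.erase i
      · simp [hjS, Finset.mem_insert, hjS]
      · have : j ∉ insert i (S.erase i) := by
          simp [Finset.mem_insert, hji, hjS]
        simp [this, hjS, Function.update_of_ne hji]
  have h2 : ∀ T ∈ (S.erase i).powerset,
      (-1 : ℝ) ^ (insert i T).card *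
        f (fun j => if j ∈ insert i (S.erase i) then (if j ∈ insert i T then a j else b j)
            else p j)
      = -((-1 : ℝ) ^ T.card *
        f (fun j => if j ∈ S.erase i then (if j ∈ T then a j else b j)
            else Function.update p i (a i) j)) := by
    intro T hT
    rw [Finset.mem_powerset] at hT
    have hiT : i ∉ T := fun h => hie (hT h)
    rw [Finset.card_insert_of_notMem hiT]
    have : (fun j => if j ∈ insert i (S.erase i) then (if j ∈ insert i T then a j else b j)
            else p j)
        = (fun j => if j ∈ S.erase i then (if j ∈ T then a j else b j)
            else Function.update p i (a i) j) := by
      funext j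
      by_cases hji : j = i
      · subst hji
        simp [hie, Function.update_self]
      · by_cases hjS : j ∈ S.erase i
        · simp [hjS, Finset.mem_insert, hji]
        · have : j ∉ insert i (S.erase i) := by simp [Finset.mem_insert, hji, hjS]
          simp [this, hjS, Function.update_of_ne hji, Finset.mem_insert, hji]
    rw [this]
    ring
  rw [Finset.sum_congr rfl h1, Finset.sum_congr rfl h2, Finset.sum_neg_distrib]
  ring

end HK
namespace HK
open Finset

variable {d : ℕ}

/-- Splitting a quasi-volume at level `c` in coordinate `i`. -/
lemma quasiVol_split (f : (Fin d → ℝ) → ℝ) {S : Finset (Fin d)} {i : Fin d} (hi : i ∈ S)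
    (p a b : Fin d → ℝ) (c : ℝ) :
    quasiVol f S p a b =
      quasiVol f S p a (Function.update b i c) + quasiVol f S p (Function.update a i c) b := by
  have hie : i ∉ S.erase i := Finset.notMem_erase i S
  rw [quasiVol_peel f hi p a b, quasiVol_peel f hi p a (Function.update b i c),
    quasiVol_peel f hi p (Function.update a i c) b]
  have congr1 : ∀ (q : Fin d → ℝ) (a' a'' b' b'' : Fin d → ℝ),
      (∀ j ∈ S.erase i, a' j = a'' j) → (∀ j ∈ S.erase i, b' j = b'' j) →
      quasiVol f (S.erase i) q a' b' = quasiVol f (S.erase i) q a'' b'' := by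
    intro q a' a'' b' b'' h1 h2
    exact quasiVol_congr f _ (fun _ _ => rfl) h1 h2
  have e1 : quasiVol f (S.erase i) (Function.update p i (Function.update b i c i)) a
      (Function.update b i c) = quasiVol f (S.erase i) (Function.update p i c) a b := by
    rw [Function.update_self]
    exact congr1 _ _ _ _ _ (fun _ _ => rfl)
      (fun j hj => Function.update_of_ne (Finset.ne_of_mem_erase hj) c b)
  have e2 : quasiVol f (S.erase i) (Function.update p i (a i)) a (Function.update b i c)
      = quasiVol f (S.erase i) (Function.update p i (a i)) a b :=
    congr1 _ _ _ _ _ (fun _ _ => rfl)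
      (fun j hj => Function.update_of_ne (Finset.ne_of_mem_erase hj) c b)
  have e3 : quasiVol f (S.erase i) (Function.update p i (b i)) (Function.update a i c) b
      = quasiVol f (S.erase i) (Function.update p i (b i)) a b :=
    congr1 _ _ _ _ _ (fun j hj => Function.update_of_ne (Finset.ne_of_mem_erase hj) c a)
      (fun _ _ => rfl)
  have e4 : quasiVol f (S.erase i) (Function.update p i (Function.update a i c i))
      (Function.update a i c) b = quasiVol f (S.erase i) (Function.update p i c) a b := by
    rw [Function.update_self]
    exact congr1 _ _ _ _ _ (fun j hj => Function.update_of_ne (Finset.ne_of_mem_erase hj) c a)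
      (fun _ _ => rfl)
  rw [e1, e2, e3, e4]
  ring

/-- A quasi-volume over a box degenerate in some active coordinate vanishes. -/
lemma quasiVol_degenerate (f : (Fin d → ℝ) → ℝ) {S : Finset (Fin d)} {i : Fin d} (hi : i ∈ S)
    {p a b : Fin d → ℝ} (hab : a i = b i) :
    quasiVol f S p a b = 0 := by
  rw [quasiVol_peel f hi p a b, hab, sub_self]

/-- Linearity-type computation: the quasi-volume of `f 0 + fp - fm`. -/
lemma quasiVol_dec (f fp fm : (Fin d → ℝ) → ℝ) {S : Finset (Fin d)} (hS : S.Nonempty)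
    (p a b : Fin d → ℝ)
    (hpt : ∀ T ∈ S.powerset,
      f (fun i => if i ∈ S then (if i ∈ T then a i else b i) else p i)
        = f 0 + fp (fun i => if i ∈ S then (if i ∈ T then a i else b i) else p i)
          - fm (fun i => if i ∈ S then (if i ∈ T then a i else b i) else p i)) :
    quasiVol f S p a b = quasiVol fp S p a b - quasiVol fm S p a b := by
  unfold quasiVol
  rw [Finset.sum_congr rfl (fun T hT => by rw [hpt T hT])]
  have hzero : (∑ T ∈ S.powerset, (-1 : ℝ) ^ T.card * f 0) = 0 := by
    rw [← Finset.sum_mul]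
    have : (∑ T ∈ S.powerset, (-1 : ℝ) ^ T.card) = 0 := by
      have := Finset.sum_powerset_neg_one_pow_card_of_nonempty (x := S) hS
      have h2 : ((∑ m ∈ S.powerset, (-1 : ℤ) ^ m.card : ℤ) : ℝ)
          = ∑ m ∈ S.powerset, (-1 : ℝ) ^ m.card := by push_cast; ring
      rw [← h2, this]; norm_num
    rw [this, zero_mul]
  calc (∑ T ∈ S.powerset, (-1 : ℝ) ^ T.card *
        (f 0 + fp (fun i => if i ∈ S then (if i ∈ T then a i else b i) else p i)
          - fm (fun i => if i ∈ S then (if i ∈ T then a i else b i) else p i)))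
      = (∑ T ∈ S.powerset, (-1 : ℝ) ^ T.card * f 0)
        + (∑ T ∈ S.powerset, (-1 : ℝ) ^ T.card *
            fp (fun i => if i ∈ S then (if i ∈ T then a i else b i) else p i))
        - (∑ T ∈ S.powerset, (-1 : ℝ) ^ T.card *
            fm (fun i => if i ∈ S then (if i ∈ T then a i else b i) else p i)) := by
        rw [← Finset.sum_add_distrib, ← Finset.sum_sub_distrib]
        exact Finset.sum_congr rfl fun T _ => by ring
    _ = _ := by rw [hzero]; ring

end HK
namespace HK
open Finset

variable {d : ℕ}

/-- Splitting a sum over a product of ranges at coordinate `i`. -/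
lemma sum_piFinset_split (i : Fin d) (n : Fin d → Finset ℕ) (g : (Fin d → ℕ) → ℝ) :
    ∑ k ∈ Fintype.piFinset n, g k
      = ∑ v ∈ n i, ∑ k ∈ Fintype.piFinset (Function.update n i {0}), g (Function.update k i v) := by
  rw [← Finset.sum_product']
  refine Finset.sum_nbij' (fun k => (k i, Function.update k i 0))
    (fun q => Function.update q.2 i q.1) ?_ ?_ ?_ ?_ ?_
  · intro k hk
    rw [Fintype.mem_piFinset] at hk
    rw [Finset.mem_product]
    constructor
    · exact hk i
    · rw [Fintype.mem_piFinset]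
      intro j
      by_cases hj : j = i
      · subst hj; simp
      · simp [Function.update_of_ne hj, hk j]
  · intro q hq
    rw [Finset.mem_product] at hq
    rw [Fintype.mem_piFinset]
    intro j
    by_cases hj : j = i
    · subst hj; simpa using hq.1
    · have := Fintype.mem_piFinset.1 hq.2 j
      simpa [Function.update_of_ne hj] using this
  · intro k _
    funext j
    by_cases hj : j = i
    · subst hj; simp
    · simp [Function.update_of_ne hj]
  · intro q hq
    have hq2 := Fintype.mem_piFinset.1 (Finset.mem_product.1 hq).2
    have hqi : q.2 i = 0 := by
      have := hq2 i
      simpa using this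
    ext j
    · simp
    · show Function.update (Function.update q.2 i q.1) i 0 j = q.2 j
      by_cases hj : j = i
      · subst hj
        simp [hqi]
      · simp [Function.update_of_ne hj]
  · intro k _
    congr 1
    funext j
    by_cases hj : j = i
    · subst hj; simp
    · simp [Function.update_of_ne hj]

end HK
namespace HK
open Finset

variable {d : ℕ}

/-- Telescoping: the sum of the quasi-volumes of the cells of a grid is the quasi-volume of the
whole box. -/
lemma telescope (f : (Fin d → ℝ) → ℝ) (S : Finset (Fin d)) (p : Fin d → ℝ)
    (m : Fin d → ℕ) (t : Fin d → ℕ → ℝ) :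
    ∑ k ∈ Fintype.piFinset (fun i => Finset.range (if i ∈ S then m i else 1)),
      quasiVol f S p (fun i => t i (k i)) (fun i => t i (k i + 1))
    = quasiVol f S p (fun i => t i 0) (fun i => t i (m i)) := by
  induction S using Finset.induction generalizing p with
  | empty =>
    have hcongr : ∀ k ∈ Fintype.piFinset (fun i : Fin d =>
        Finset.range (if i ∈ (∅ : Finset (Fin d)) then m i else 1)),
        quasiVol f ∅ p (fun i => t i (k i)) (fun i => t i (k i + 1)) = f p := fun k _ =>
      quasiVol_empty f p _ _
    rw [Finset.sum_congr rfl hcongr, Finset.sum_const, quasiVol_empty]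
    have : (Fintype.piFinset (fun i : Fin d =>
        Finset.range (if i ∈ (∅ : Finset (Fin d)) then m i else 1))).card = 1 := by
      rw [Fintype.card_piFinset]
      simp
    rw [this, one_smul]
  | @insert i S₀ hiS₀ ih =>
    have hins : i ∈ insert i S₀ := Finset.mem_insert_self i S₀
    have herase : (insert i S₀).erase i = S₀ := Finset.erase_insert hiS₀
    rw [sum_piFinset_split i _ _]
    have hset : Function.update (fun j => Finset.range (if j ∈ insert i S₀ then m j else 1)) i
        ({0} : Finset ℕ)
        = fun j => Finset.range (if j ∈ S₀ then m j else 1) := by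
      funext j
      by_cases hj : j = i
      · subst hj
        simp [hiS₀, Finset.range_one]
      · simp [Function.update_of_ne hj, Finset.mem_insert, hj]
    rw [hset]
    rw [if_pos hins]
    have hterm : ∀ v ∈ Finset.range (m i),
        ∀ k ∈ Fintype.piFinset (fun j => Finset.range (if j ∈ S₀ then m j else 1)),
        quasiVol f (insert i S₀) p (fun j => t j (Function.update k i v j))
            (fun j => t j (Function.update k i v j + 1))
          = quasiVol f S₀ (Function.update p i (t i (v + 1)))
              (fun j => t j (k j)) (fun j => t j (k j + 1))
            - quasiVol f S₀ (Function.update p i (t i v))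
              (fun j => t j (k j)) (fun j => t j (k j + 1)) := by
      intro v _ k _
      rw [quasiVol_peel f hins, herase]
      have ha : ∀ j ∈ S₀, t j (Function.update k i v j) = t j (k j) := by
        intro j hj
        rw [Function.update_of_ne (fun h => hiS₀ (by rw [← h]; exact hj))]
      have hb : ∀ j ∈ S₀, t j (Function.update k i v j + 1) = t j (k j + 1) := by
        intro j hj
        rw [Function.update_of_ne (fun h => hiS₀ (by rw [← h]; exact hj))]
      have hai : t i (Function.update k i v i) = t i v := by rw [Function.update_self]
      have hbi : t i (Function.update k i v i + 1) = t i (v + 1) := by rw [Function.update_self]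
      rw [hai, hbi]
      rw [quasiVol_congr f S₀ (p := Function.update p i (t i (v+1)))
        (p' := Function.update p i (t i (v+1))) (fun _ _ => rfl) ha hb]
      rw [quasiVol_congr f S₀ (p := Function.update p i (t i v))
        (p' := Function.update p i (t i v)) (fun _ _ => rfl) ha hb]
    rw [Finset.sum_congr rfl (fun v hv => Finset.sum_congr rfl (hterm v hv))]
    have hsplit : ∀ v ∈ Finset.range (m i),
        (∑ k ∈ Fintype.piFinset (fun j => Finset.range (if j ∈ S₀ then m j else 1)),
          (quasiVol f S₀ (Function.update p i (t i (v + 1)))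
              (fun j => t j (k j)) (fun j => t j (k j + 1))
            - quasiVol f S₀ (Function.update p i (t i v))
              (fun j => t j (k j)) (fun j => t j (k j + 1))))
        = quasiVol f S₀ (Function.update p i (t i (v + 1))) (fun j => t j 0) (fun j => t j (m j))
          - quasiVol f S₀ (Function.update p i (t i v)) (fun j => t j 0) (fun j => t j (m j)) := by
      intro v _
      rw [Finset.sum_sub_distrib, ih, ih]
    rw [Finset.sum_congr rfl hsplit]
    rw [Finset.sum_range_sub (fun v => quasiVol f S₀ (Function.update p i (t i v))
      (fun j => t j 0) (fun j => t j (m j)))]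
    rw [quasiVol_peel f hins p, herase]

end HK
namespace HK
open Finset

variable {d : ℕ}

/-- Master decomposition: a function is the sum of its anchored quasi-volumes. -/
lemma master (h : (Fin d → ℝ) → ℝ) (z : Fin d → ℝ) :
    ∑ U ∈ (Finset.univ : Finset (Fin d)).powerset, quasiVol h U 0 0 z = h z := by
  unfold quasiVol
  rw [Finset.sum_sigma']
  have key : ∑ x ∈ (Finset.univ : Finset (Fin d)).powerset.sigma (fun U => U.powerset),
      (-1 : ℝ) ^ x.2.card *
        h (fun i => if i ∈ x.1 then (if i ∈ x.2 then (0 : Fin d → ℝ) i else z i) else (0 : Fin d → ℝ) i)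
      = ∑ y ∈ (Finset.univ : Finset (Fin d)).powerset.sigma (fun W => Wᶜ.powerset),
      (-1 : ℝ) ^ y.2.card * h (fun i => if i ∈ y.1 then z i else 0) := by
    refine Finset.sum_nbij' (fun x => ⟨x.1 \ x.2, x.2⟩) (fun y => ⟨y.1 ∪ y.2, y.2⟩) ?_ ?_ ?_ ?_ ?_
    · intro x hx
      rw [Finset.mem_sigma] at hx ⊢
      refine ⟨Finset.mem_powerset.2 (Finset.subset_univ _), Finset.mem_powerset.2 ?_⟩
      intro j hj
      rw [Finset.mem_compl]
      intro hjd
      exact (Finset.mem_sdiff.1 hjd).2 hj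
    · intro y hy
      rw [Finset.mem_sigma] at hy ⊢
      exact ⟨Finset.mem_powerset.2 (Finset.subset_univ _),
        Finset.mem_powerset.2 (Finset.subset_union_right)⟩
    · intro x hx
      rw [Finset.mem_sigma] at hx
      have h2 := Finset.mem_powerset.1 hx.2
      ext1
      · exact Finset.sdiff_union_of_subset h2
      · rfl
    · intro y hy
      rw [Finset.mem_sigma] at hy
      have h2 := Finset.mem_powerset.1 hy.2
      have hdisj : Disjoint y.1 y.2 := by
        rw [Finset.disjoint_right]
        intro j hj
        exact Finset.mem_compl.1 (h2 hj)
      ext1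
      · exact Finset.union_sdiff_cancel_right hdisj
      · rfl
    · intro x hx
      rw [Finset.mem_sigma] at hx
      congr 1
      congr 1
      funext j
      by_cases hj1 : j ∈ x.1
      · by_cases hj2 : j ∈ x.2
        · simp [hj1, hj2, Finset.mem_sdiff]
        · simp [hj1, hj2, Finset.mem_sdiff]
      · have hj2 : j ∉ x.2 := fun hc => hj1 (Finset.mem_powerset.1 hx.2 hc)
        simp [hj1, hj2, Finset.mem_sdiff]
  rw [key, Finset.sum_sigma]
  have inner : ∀ W ∈ (Finset.univ : Finset (Fin d)).powerset,
      (∑ T ∈ Wᶜ.powerset, (-1 : ℝ) ^ T.card * h (fun i => if i ∈ W then z i else 0))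
      = (if Wᶜ = ∅ then (1:ℝ) else 0) * h (fun i => if i ∈ W then z i else 0) := by
    intro W _
    rw [← Finset.sum_mul]
    congr 1
    have h2 : ((∑ m ∈ Wᶜ.powerset, (-1 : ℤ) ^ m.card : ℤ) : ℝ)
        = ∑ m ∈ Wᶜ.powerset, (-1 : ℝ) ^ m.card := by push_cast; ring
    rw [← h2, Finset.sum_powerset_neg_one_pow_card]
    split <;> norm_num
  rw [Finset.sum_congr rfl inner]
  have : ∀ W ∈ (Finset.univ : Finset (Fin d)).powerset,
      (if Wᶜ = ∅ then (1:ℝ) else 0) * h (fun i => if i ∈ W then z i else 0)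
      = if W = Finset.univ then h (fun i => if i ∈ W then z i else 0) else 0 := by
    intro W _
    by_cases hW : W = Finset.univ
    · simp [hW]
    · have : Wᶜ ≠ ∅ := by
        intro hc
        exact hW (by simpa [Finset.compl_eq_empty_iff] using hc)
      simp [this, hW]
  rw [Finset.sum_congr rfl this, Finset.sum_ite_eq' _ Finset.univ
    (fun W => h (fun i => if i ∈ W then z i else 0))]
  simp

end HK
namespace HK
open Finset

variable {d : ℕ}

lemma quasiVol_nonneg {g : (Fin d → ℝ) → ℝ} (hcm : CompletelyMonotone g)
    {S : Finset (Fin d)} (hS : S.Nonempty) {a b : Fin d → ℝ}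
    (ha0 : ∀ i ∈ S, 0 ≤ a i) (hb1 : ∀ i ∈ S, b i ≤ 1) (hab : ∀ i ∈ S, a i ≤ b i) :
    0 ≤ quasiVol g S 0 a b := by
  have hcg : quasiVol g S 0 a b
      = quasiVol g S 0 (fun i => if i ∈ S then a i else 0) (fun i => if i ∈ S then b i else 0) :=
    quasiVol_congr g S (fun _ _ => rfl) (fun i hi => by simp [hi]) (fun i hi => by simp [hi])
  rw [hcg]
  refine hcm S hS 0 (fun i _ => Or.inl rfl) _ _ ?_ ?_ ?_
  · constructor
    · intro i
      by_cases hi : i ∈ S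
      · simpa [hi] using ha0 i hi
      · simp [hi]
    · intro i
      by_cases hi : i ∈ S
      · simpa [hi] using le_trans (hab i hi) (hb1 i hi)
      · simp [hi]
  · constructor
    · intro i
      by_cases hi : i ∈ S
      · simpa [hi] using le_trans (ha0 i hi) (hab i hi)
      · simp [hi]
    · intro i
      by_cases hi : i ∈ S
      · simpa [hi] using hb1 i hi
      · simp [hi]
  · intro i
    by_cases hi : i ∈ S
    · simpa [hi] using hab i hi
    · simp [hi]

lemma quasiVol_step {g : (Fin d → ℝ) → ℝ} (hcm : CompletelyMonotone g)
    {S : Finset (Fin d)} {i : Fin d} (hi : i ∈ S) {a b : Fin d → ℝ} {c₁ c₂ : ℝ}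
    (h0 : ∀ j ∈ S, 0 ≤ a j) (hab : ∀ j ∈ S, a j ≤ b j) (h4 : ∀ j ∈ S, b j ≤ 1)
    (hc0 : a i ≤ c₁) (hc : c₁ ≤ c₂) (hc1 : c₂ ≤ b i) :
    quasiVol g S 0 (Function.update a i c₁) (Function.update b i c₂)
      ≤ quasiVol g S 0 a b := by
  have hS : S.Nonempty := ⟨i, hi⟩
  have split1 := quasiVol_split g hi (0 : Fin d → ℝ) a b c₂
  have pos1 : 0 ≤ quasiVol g S 0 (Function.update a i c₂) b := by
    refine quasiVol_nonneg hcm hS ?_ h4 ?_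
    · intro j hj
      by_cases hji : j = i
      · subst hji; rw [Function.update_self]
        exact le_trans (h0 j hj) (le_trans hc0 hc)
      · rw [Function.update_of_ne hji]; exact h0 j hj
    · intro j hj
      by_cases hji : j = i
      · subst hji; rw [Function.update_self]; exact hc1
      · rw [Function.update_of_ne hji]; exact hab j hj
  have step1 : quasiVol g S 0 a (Function.update b i c₂) ≤ quasiVol g S 0 a b := by
    rw [split1]; linarith
  have split2 := quasiVol_split g hi (0 : Fin d → ℝ) a (Function.update b i c₂) c₁
  rw [Function.update_idem] at split2
  have pos2 : 0 ≤ quasiVol g S 0 a (Function.update b i c₁) := by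
    refine quasiVol_nonneg hcm hS h0 ?_ ?_
    · intro j hj
      by_cases hji : j = i
      · subst hji; rw [Function.update_self]
        exact le_trans hc (le_trans hc1 (h4 j hj))
      · rw [Function.update_of_ne hji]; exact h4 j hj
    · intro j hj
      by_cases hji : j = i
      · subst hji; rw [Function.update_self]; exact hc0
      · rw [Function.update_of_ne hji]; exact hab j hj
  have step2 : quasiVol g S 0 (Function.update a i c₁) (Function.update b i c₂)
      ≤ quasiVol g S 0 a (Function.update b i c₂) := by
    rw [split2]; linarith
  exact le_trans step2 step1

lemma quasiVol_mono_box {g : (Fin d → ℝ) → ℝ} (hcm : CompletelyMonotone g)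
    {S : Finset (Fin d)} (hS : S.Nonempty) {a a' b' b : Fin d → ℝ}
    (h0 : ∀ i ∈ S, 0 ≤ a i) (h1 : ∀ i ∈ S, a i ≤ a' i) (h2 : ∀ i ∈ S, a' i ≤ b' i)
    (h3 : ∀ i ∈ S, b' i ≤ b i) (h4 : ∀ i ∈ S, b i ≤ 1) :
    quasiVol g S 0 a' b' ≤ quasiVol g S 0 a b := by
  classical
  have main : ∀ D : Finset (Fin d), D ⊆ S →
      quasiVol g S 0 (fun j => if j ∈ D then a' j else a j)
        (fun j => if j ∈ D then b' j else b j) ≤ quasiVol g S 0 a b := by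
    intro D
    induction D using Finset.induction with
    | empty => intro _; simp
    | @insert i D hiD ihD =>
      intro hsub
      have hiS : i ∈ S := hsub (Finset.mem_insert_self i D)
      have hDS : D ⊆ S := fun j hj => hsub (Finset.mem_insert_of_mem hj)
      have keyeq1 : (fun j => if j ∈ insert i D then a' j else a j)
          = Function.update (fun j => if j ∈ D then a' j else a j) i (a' i) := by
        funext j
        by_cases hji : j = i
        · subst hji; simp [hiD]
        · rw [Function.update_of_ne hji]
          simp [Finset.mem_insert, hji]
      have keyeq2 : (fun j => if j ∈ insert i D then b' j else b j)
          = Function.update (fun j => if j ∈ D then b' j else b j) i (b' i) := by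
        funext j
        by_cases hji : j = i
        · subst hji; simp [hiD]
        · rw [Function.update_of_ne hji]
          simp [Finset.mem_insert, hji]
      rw [keyeq1, keyeq2]
      refine le_trans (quasiVol_step hcm hiS ?_ ?_ ?_ ?_ (h2 i hiS) ?_) (ihD hDS)
      · intro j hj
        by_cases hjD : j ∈ D
        · simp only [hjD, if_pos]
          exact le_trans (h0 j hj) (h1 j hj)
        · simp only [hjD, if_neg, if_false]
          exact h0 j hj
      · intro j hj
        by_cases hjD : j ∈ D
        · simp only [hjD, if_pos]
          exact h2 j hj
        · simp only [hjD, if_neg, if_false]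
          exact le_trans (h1 j hj) (le_trans (h2 j hj) (h3 j hj))
      · intro j hj
        by_cases hjD : j ∈ D
        · simp only [hjD, if_pos]
          exact le_trans (h3 j hj) (h4 j hj)
        · simp only [hjD, if_neg, if_false]
          exact h4 j hj
      · have hiDn : i ∉ D := hiD
        simp only [hiDn, if_neg, if_false]
        exact h1 i hiS
      · have hiDn : i ∉ D := hiD
        simp only [hiDn, if_neg, if_false]
        exact h3 i hiS
  have := main S (le_refl S)
  calc quasiVol g S 0 a' b'
      = quasiVol g S 0 (fun j => if j ∈ S then a' j else a j)
          (fun j => if j ∈ S then b' j else b j) :=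
        quasiVol_congr g S (fun _ _ => rfl) (fun i hi => by simp [hi]) (fun i hi => by simp [hi])
    _ ≤ quasiVol g S 0 a b := this

lemma coord_diff (g : (Fin d → ℝ) → ℝ) (q : Fin d → ℝ) (i : Fin d) (c₁ c₂ : ℝ) :
    g (Function.update q i c₂) - g (Function.update q i c₁)
      = ∑ U ∈ (Finset.univ : Finset (Fin d)).powerset,
          (if i ∈ U then
            quasiVol g U 0 (Function.update 0 i c₁) (Function.update q i c₂) else 0) := by
  rw [← master g (Function.update q i c₂), ← master g (Function.update q i c₁),
    ← Finset.sum_sub_distrib]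
  refine Finset.sum_congr rfl fun U _ => ?_
  by_cases hiU : i ∈ U
  · rw [if_pos hiU]
    have split := quasiVol_split g hiU (0 : Fin d → ℝ) 0 (Function.update q i c₂) c₁
    rw [Function.update_idem] at split
    rw [split]
    ring
  · rw [if_neg hiU]
    have : quasiVol g U 0 0 (Function.update q i c₂) = quasiVol g U 0 0 (Function.update q i c₁) :=
      quasiVol_congr g U (fun _ _ => rfl) (fun _ _ => rfl)
        (fun j hj => by
          rw [Function.update_of_ne (fun h => hiU (by rw [← h]; exact hj)),
            Function.update_of_ne (fun h => hiU (by rw [← h]; exact hj))])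
    rw [this]; ring

end HK
namespace HK
open Finset

variable {d : ℕ}

/-- The trivial one-cell grid. -/
def trivGrid (S : Finset (Fin d)) : Grid d S 0 1 where
  m := fun _ => 1
  t := fun _ j => if j = 0 then 0 else 1
  mono := by
    intro i _ j k hjk _
    by_cases hj : j = 0
    · subst hj
      by_cases hk : k = 0 <;> simp [hk]
    · have hk : k ≠ 0 := fun h => hj (Nat.le_zero.1 (h ▸ hjk))
      simp [hj, hk]
  first := fun i _ => by simp
  last := fun i _ => by simp

instance (S : Finset (Fin d)) : Nonempty (Grid d S 0 1) := ⟨trivGrid S⟩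

lemma grid_t_bounds {S : Finset (Fin d)} (G : Grid d S 0 1) {i : Fin d} (hi : i ∈ S)
    {j : ℕ} (hj : j ≤ G.m i) : 0 ≤ G.t i j ∧ G.t i j ≤ 1 := by
  constructor
  · have := G.mono i hi 0 j (Nat.zero_le j) hj
    rw [G.first i hi] at this
    simpa using this
  · have := G.mono i hi j (G.m i) hj (le_refl _)
    rw [G.last i hi] at this
    simpa using this

lemma mem_cellIndex {S : Finset (Fin d)} {G : Grid d S 0 1} {k : Fin d → ℕ}
    (hk : k ∈ Fintype.piFinset (fun i => Finset.range (if i ∈ S then G.m i else 1)))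
    {i : Fin d} (hi : i ∈ S) : k i < G.m i := by
  have := Fintype.mem_piFinset.1 hk i
  rw [if_pos hi] at this
  exact Finset.mem_range.1 this

/-- For a completely monotone function, every grid sum equals the quasi-volume of the box. -/
lemma cm_gridSum {g : (Fin d → ℝ) → ℝ} (hcm : CompletelyMonotone g)
    {S : Finset (Fin d)} (hS : S.Nonempty) (G : Grid d S 0 1) :
    gridSum g S 0 0 1 G = quasiVol g S 0 0 1 := by
  unfold gridSum
  have habs : ∀ k ∈ Fintype.piFinset (fun i => Finset.range (if i ∈ S then G.m i else 1)),
      |quasiVol g S 0 (fun i => G.t i (k i)) (fun i => G.t i (k i + 1))|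
        = quasiVol g S 0 (fun i => G.t i (k i)) (fun i => G.t i (k i + 1)) := by
    intro k hk
    refine abs_of_nonneg (quasiVol_nonneg hcm hS ?_ ?_ ?_)
    · intro i hi
      exact (grid_t_bounds G hi (le_of_lt (mem_cellIndex hk hi))).1
    · intro i hi
      exact (grid_t_bounds G hi (mem_cellIndex hk hi)).2
    · intro i hi
      exact G.mono i hi (k i) (k i + 1) (Nat.le_succ _) (mem_cellIndex hk hi)
  rw [Finset.sum_congr rfl habs, telescope g S 0 G.m G.t]
  exact quasiVol_congr g S (fun _ _ => rfl) (fun i hi => G.first i hi) (fun i hi => G.last i hi)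

lemma cm_vitaliVar {g : (Fin d → ℝ) → ℝ} (hcm : CompletelyMonotone g)
    {S : Finset (Fin d)} (hS : S.Nonempty) :
    vitaliVar g S 0 0 1 = quasiVol g S 0 0 1 := by
  unfold vitaliVar
  have : gridSum g S 0 0 1 = fun _ => quasiVol g S 0 0 1 :=
    funext fun G => cm_gridSum hcm hS G
  rw [this, Set.range_const, csSup_singleton]

/-- The anchored-at-0 HK variation of a completely monotone function vanishing at `0`. -/
lemma cm_hkVar0 {g : (Fin d → ℝ) → ℝ} (hcm : CompletelyMonotone g) (hg0 : g 0 = 0) :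
    hkVar0 g = g 1 := by
  unfold hkVar0 hkVarOn
  have hsum : ∀ S ∈ ((Finset.univ : Finset (Fin d)).powerset.erase ∅),
      vitaliVar g S 0 0 1 = quasiVol g S 0 0 1 := by
    intro S hs
    have hne : S ≠ ∅ := (Finset.mem_erase.1 hs).1
    exact cm_vitaliVar hcm (Finset.nonempty_iff_ne_empty.2 hne)
  rw [Finset.sum_congr rfl hsum,
    Finset.sum_erase_eq_sub (Finset.empty_mem_powerset _), master g 1, quasiVol_empty]
  rw [hg0, sub_zero]

end HK
namespace HK
open Finset

variable {d : ℕ}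

/-- Finding a common small `y` for finitely many downward-closed properties. -/
lemma common_y {α : Type*} [DecidableEq α] (P : Finset α) {x1 : ℝ} (hx : x1 < 1)
    (Q : α → ℝ → Prop)
    (hdc : ∀ a ∈ P, ∀ y z : ℝ, y ∈ Set.Ioc x1 1 → z ∈ Set.Ioc x1 1 → y ≤ z → Q a z → Q a y)
    (hex : ∀ a ∈ P, ∃ y ∈ Set.Ioc x1 1, Q a y) :
    ∃ y ∈ Set.Ioc x1 1, ∀ a ∈ P, Q a y := by
  induction P using Finset.induction with
  | empty => exact ⟨1, ⟨hx, le_refl 1⟩, fun a ha => absurd ha (Finset.notMem_empty a)⟩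
  | @insert a P haP ih =>
    obtain ⟨y₂, hy₂, hQ₂⟩ := ih
      (fun b hb => hdc b (Finset.mem_insert_of_mem hb))
      (fun b hb => hex b (Finset.mem_insert_of_mem hb))
    obtain ⟨y₁, hy₁, hQ₁⟩ := hex a (Finset.mem_insert_self a P)
    refine ⟨min y₁ y₂, ⟨lt_min hy₁.1 hy₂.1, le_trans (min_le_left _ _) hy₁.2⟩, ?_⟩
    intro b hb
    rcases Finset.mem_insert.1 hb with rfl | hbP
    · exact hdc b (Finset.mem_insert_self b P) _ y₁
        ⟨lt_min hy₁.1 hy₂.1, le_trans (min_le_left _ _) hy₁.2⟩ hy₁ (min_le_left _ _) hQ₁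
    · exact hdc b (Finset.mem_insert_of_mem hbP) _ y₂
        ⟨lt_min hy₁.1 hy₂.1, le_trans (min_le_left _ _) hy₁.2⟩ hy₂ (min_le_right _ _)
        (hQ₂ b hbP)

/-- One-sided comparison of infima of two nearly equal monotone nonneg functions. -/
lemma sInf_le_sInf_of_close {x1 : ℝ} (hx : x1 < 1) (A B : ℝ → ℝ)
    (hBmono : ∀ y z : ℝ, y ∈ Set.Ioc x1 1 → z ∈ Set.Ioc x1 1 → y ≤ z → B y ≤ B z)
    (hA0 : ∀ y ∈ Set.Ioc x1 1, 0 ≤ A y)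
    (hclose : ∀ ε > (0:ℝ), ∃ y ∈ Set.Ioc x1 1, ∀ z ∈ Set.Ioc x1 y, |A z - B z| < ε) :
    sInf (A '' Set.Ioc x1 1) ≤ sInf (B '' Set.Ioc x1 1) := by
  have h1 : (1:ℝ) ∈ Set.Ioc x1 1 := ⟨hx, le_refl 1⟩
  have hne : (B '' Set.Ioc x1 1).Nonempty := ⟨B 1, 1, h1, rfl⟩
  have hbdd : BddBelow (A '' Set.Ioc x1 1) := by
    refine ⟨0, ?_⟩
    rintro _ ⟨y, hy, rfl⟩
    exact hA0 y hy
  refine le_of_forall_pos_le_add fun ε hε => ?_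
  obtain ⟨_, ⟨y₂, hy₂, rfl⟩, hb⟩ := Real.lt_sInf_add_pos hne (half_pos hε)
  obtain ⟨y₃, hy₃, hcl⟩ := hclose (ε/2) (half_pos hε)
  set z := min y₂ y₃ with hz
  have hzIoc : z ∈ Set.Ioc x1 1 := ⟨lt_min hy₂.1 hy₃.1, le_trans (min_le_left _ _) hy₂.2⟩
  have hzy₃ : z ∈ Set.Ioc x1 y₃ := ⟨hzIoc.1, min_le_right _ _⟩
  have h4 : A z < B z + ε/2 := by
    have := hcl z hzy₃
    have := abs_lt.1 this
    linarith [this.1, this.2]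
  have h5 : B z ≤ B y₂ := hBmono z y₂ hzIoc ⟨hy₂.1, hy₂.2⟩ (min_le_left _ _)
  have h6 : sInf (A '' Set.Ioc x1 1) ≤ A z := csInf_le hbdd ⟨z, hzIoc, rfl⟩
  linarith

/-- A degenerate-limit statement: the quasi-volume of a slab shrinking in coordinate `i`
tends to `0` for a right-continuous function. -/
lemma tendsto_quasiVol_deg {f : (Fin d → ℝ) → ℝ} (hrc : RightCts f)
    {U : Finset (Fin d)} {i : Fin d} (hiU : i ∈ U)
    {a b : Fin d → ℝ} {c : ℝ} (hai : a i = c)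
    (haIcc : ∀ j ∈ U, 0 ≤ a j ∧ a j ≤ 1) (hbIcc : ∀ j ∈ U, 0 ≤ b j ∧ b j ≤ 1) :
    Filter.Tendsto (fun y => quasiVol f U 0 a (Function.update b i y))
      (nhdsWithin c (Set.Icc c 1)) (nhds 0) := by
  unfold quasiVol
  simp only [Pi.zero_apply]
  have hzero : (0:ℝ) = ∑ T ∈ U.powerset, (-1 : ℝ) ^ T.card *
      f (fun j => if j ∈ U then (if j ∈ T then a j else Function.update b i c j) else 0) := by
    have h0 : quasiVol f U 0 a (Function.update b i c) = 0 :=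
      quasiVol_degenerate f hiU (by rw [hai, Function.update_self])
    unfold quasiVol at h0
    simp only [Pi.zero_apply] at h0
    rw [h0]
  have hterm : ∀ T ∈ U.powerset,
      Filter.Tendsto (fun y => (-1 : ℝ) ^ T.card *
        f (fun j => if j ∈ U then (if j ∈ T then a j else Function.update b i y j) else 0))
        (nhdsWithin c (Set.Icc c 1))
        (nhds ((-1 : ℝ) ^ T.card *
          f (fun j => if j ∈ U then (if j ∈ T then a j else Function.update b i c j) else 0))) :=
    ?_
  · have hsum := tendsto_finset_sum (f := fun T y => (-1 : ℝ) ^ T.card *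
        f (fun j => if j ∈ U then (if j ∈ T then a j else Function.update b i y j) else 0))
        U.powerset (fun T hT => hterm T hT)
    convert hsum using 2
    try exact hzero
  intro T hT
  rw [Finset.mem_powerset] at hT
  by_cases hiT : i ∈ T
  · have hconst : ∀ y : ℝ, (fun j => if j ∈ U then (if j ∈ T then a j
        else Function.update b i y j) else (0:ℝ))
        = (fun j => if j ∈ U then (if j ∈ T then a j else Function.update b i c j) else 0) := by
      intro y
      funext j
      by_cases hji : j = i
      · subst hji; simp [hiU, hiT]
      · rw [Function.update_of_ne hji, Function.update_of_ne hji]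
    simp only [hconst]
    exact tendsto_const_nhds
  · set P : Fin d → ℝ := fun j => if j ∈ U then (if j ∈ T then a j
        else Function.update b i c j) else 0 with hP
    have hPic : P i = c := by simp [hP, hiU, hiT]
    have hPmem : P ∈ Set.Icc (0 : Fin d → ℝ) 1 := by
      constructor
      · intro j
        by_cases hjU : j ∈ U
        · by_cases hjT : j ∈ T
          · simpa [hP, hjU, hjT] using (haIcc j hjU).1
          · by_cases hji : j = i
            · subst hji
              simp only [hP, hjU, hjT, if_true, if_false, Function.update_self, Pi.zero_apply]
              rw [← hai]; exact (haIcc j hjU).1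
            · simp only [hP, hjU, hjT, if_true, if_false, Function.update_of_ne hji,
                Pi.zero_apply]
              exact (hbIcc j hjU).1
        · simp [hP, hjU]
      · intro j
        by_cases hjU : j ∈ U
        · by_cases hjT : j ∈ T
          · simpa [hP, hjU, hjT] using (haIcc j hjU).2
          · by_cases hji : j = i
            · subst hji
              simp only [hP, hjU, hjT, if_true, if_false, Function.update_self, Pi.one_apply]
              rw [← hai]; exact (haIcc j hjU).2
            · simp only [hP, hjU, hjT, if_true, if_false, Function.update_of_ne hji,
                Pi.one_apply]
              exact (hbIcc j hjU).2
        · simp [hP, hjU]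
    have heq : ∀ y : ℝ, (fun j => if j ∈ U then (if j ∈ T then a j
        else Function.update b i y j) else (0:ℝ)) = Function.update P i y := by
      intro y
      funext j
      by_cases hji : j = i
      · subst hji
        simp [hP, hiU, hiT, Function.update_self]
      · rw [Function.update_of_ne hji]
        simp only [hP]
        by_cases hjU : j ∈ U
        · by_cases hjT : j ∈ T
          · simp [hjU, hjT, Function.update_of_ne hji]
          · simp [hjU, hjT, Function.update_of_ne hji]
        · simp [hjU, Function.update_of_ne hji]
    have hmain := hrc P hPmem i
    rw [hPic] at hmain
    have : f P = f (fun j => if j ∈ U then (if j ∈ T then a j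
        else Function.update b i c j) else 0) := by rw [← hP]
    simp only [heq]
    rw [this] at hmain
    exact hmain.const_mul _

/-- Extract from a degenerate limit an interval bound. -/
lemma close_of_tendsto {x1 : ℝ} (hx : x1 < 1) (A : ℝ → ℝ)
    (h : Filter.Tendsto A (nhdsWithin x1 (Set.Icc x1 1)) (nhds 0)) :
    ∀ ε > (0:ℝ), ∃ y ∈ Set.Ioc x1 1, ∀ z ∈ Set.Ioc x1 y, |A z| < ε := by
  intro ε hε
  rw [Metric.tendsto_nhdsWithin_nhds] at h
  obtain ⟨δ, hδ, hball⟩ := h ε hε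
  refine ⟨min (x1 + δ/2) 1, ⟨lt_min (by linarith) hx, min_le_right _ _⟩, ?_⟩
  intro z hz
  have hz1 : z ≤ 1 := le_trans hz.2 (min_le_right _ _)
  have hzd : z - x1 ≤ δ/2 := by
    have := le_trans hz.2 (min_le_left _ _)
    linarith
  have hmem : z ∈ Set.Icc x1 1 := ⟨le_of_lt hz.1, hz1⟩
  have hdist : dist z x1 < δ := by
    rw [Real.dist_eq, abs_of_nonneg (by linarith [hz.1.le] : (0:ℝ) ≤ z - x1)]
    linarith
  have := hball hmem hdist
  rwa [Real.dist_eq, sub_zero] at this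

end HK
namespace HK
open Finset

variable {d : ℕ}

lemma quasiVol_dec' {f fp fm : (Fin d → ℝ) → ℝ}
    (hdec : ∀ z ∈ Set.Icc (0 : Fin d → ℝ) 1, f z = f 0 + fp z - fm z)
    {U : Finset (Fin d)} (hU : U.Nonempty) {a b : Fin d → ℝ}
    (ha : ∀ j ∈ U, 0 ≤ a j ∧ a j ≤ 1) (hb : ∀ j ∈ U, 0 ≤ b j ∧ b j ≤ 1) :
    quasiVol f U 0 a b = quasiVol fp U 0 a b - quasiVol fm U 0 a b := by
  refine quasiVol_dec f fp fm hU 0 a b ?_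
  intro T hT
  rw [Finset.mem_powerset] at hT
  refine hdec _ ?_
  constructor
  · intro j
    by_cases hjU : j ∈ U
    · by_cases hjT : j ∈ T
      · simpa [hjU, hjT] using (ha j hjU).1
      · simpa [hjU, hjT] using (hb j hjU).1
    · simp [hjU]
  · intro j
    by_cases hjU : j ∈ U
    · by_cases hjT : j ∈ T
      · simpa [hjU, hjT] using (ha j hjU).2
      · simpa [hjU, hjT] using (hb j hjU).2
    · simp [hjU]

lemma colMono {g : (Fin d → ℝ) → ℝ} (hcm : CompletelyMonotone g)
    {U : Finset (Fin d)} {i : Fin d} (hiU : i ∈ U) {x1 : ℝ} (hx10 : 0 ≤ x1)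
    {lo hi : Fin d → ℝ}
    (hlo0 : ∀ j ∈ U, j ≠ i → 0 ≤ lo j) (hhi1 : ∀ j ∈ U, j ≠ i → hi j ≤ 1)
    (hlohi : ∀ j ∈ U, j ≠ i → lo j ≤ hi j) :
    ∀ y z : ℝ, y ∈ Set.Ioc x1 1 → z ∈ Set.Ioc x1 1 → y ≤ z →
      quasiVol g U 0 (Function.update lo i x1) (Function.update hi i y)
        ≤ quasiVol g U 0 (Function.update lo i x1) (Function.update hi i z) := by
  intro y z hy hz hyz
  refine quasiVol_mono_box hcm ⟨i, hiU⟩ (a := Function.update lo i x1)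
    (a' := Function.update lo i x1) (b' := Function.update hi i y)
    (b := Function.update hi i z) ?_ (fun _ _ => le_refl _) ?_ ?_ ?_
  · intro j hj
    by_cases hji : j = i
    · subst hji; rw [Function.update_self]; exact hx10
    · rw [Function.update_of_ne hji]; exact hlo0 j hj hji
  · intro j hj
    by_cases hji : j = i
    · subst hji; rw [Function.update_self, Function.update_self]; exact le_of_lt hy.1
    · rw [Function.update_of_ne hji, Function.update_of_ne hji]; exact hlohi j hj hji
  · intro j hj
    by_cases hji : j = i
    · subst hji; rw [Function.update_self, Function.update_self]; exact hyz
    · rw [Function.update_of_ne hji, Function.update_of_ne hji]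
  · intro j hj
    by_cases hji : j = i
    · subst hji; rw [Function.update_self]; exact hz.2
    · rw [Function.update_of_ne hji]; exact hhi1 j hj hji

lemma colNonneg {g : (Fin d → ℝ) → ℝ} (hcm : CompletelyMonotone g)
    {U : Finset (Fin d)} {i : Fin d} (hiU : i ∈ U) {x1 : ℝ} (hx10 : 0 ≤ x1)
    {lo hi : Fin d → ℝ}
    (hlo0 : ∀ j ∈ U, j ≠ i → 0 ≤ lo j) (hhi1 : ∀ j ∈ U, j ≠ i → hi j ≤ 1)
    (hlohi : ∀ j ∈ U, j ≠ i → lo j ≤ hi j) :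
    ∀ y : ℝ, y ∈ Set.Ioc x1 1 →
      0 ≤ quasiVol g U 0 (Function.update lo i x1) (Function.update hi i y) := by
  intro y hy
  refine quasiVol_nonneg hcm ⟨i, hiU⟩ ?_ ?_ ?_
  · intro j hj
    by_cases hji : j = i
    · subst hji; rw [Function.update_self]; exact hx10
    · rw [Function.update_of_ne hji]; exact hlo0 j hj hji
  · intro j hj
    by_cases hji : j = i
    · subst hji; rw [Function.update_self]; exact hy.2
    · rw [Function.update_of_ne hji]; exact hhi1 j hj hji
  · intro j hj
    by_cases hji : j = i
    · subst hji; rw [Function.update_self, Function.update_self]; exact le_of_lt hy.1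
    · rw [Function.update_of_ne hji, Function.update_of_ne hji]; exact hlohi j hj hji

lemma col_sInf_eq {f fp fm : (Fin d → ℝ) → ℝ} (hrc : RightCts f)
    (hfpcm : CompletelyMonotone fp) (hfmcm : CompletelyMonotone fm)
    (hdec : ∀ z ∈ Set.Icc (0 : Fin d → ℝ) 1, f z = f 0 + fp z - fm z)
    {U : Finset (Fin d)} {i : Fin d} (hiU : i ∈ U) {x1 : ℝ} (hx10 : 0 ≤ x1) (hx11 : x1 < 1)
    {lo hi : Fin d → ℝ}
    (hlo0 : ∀ j ∈ U, j ≠ i → 0 ≤ lo j) (hhi1 : ∀ j ∈ U, j ≠ i → hi j ≤ 1)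
    (hlohi : ∀ j ∈ U, j ≠ i → lo j ≤ hi j) :
    sInf ((fun y => quasiVol fp U 0 (Function.update lo i x1) (Function.update hi i y))
        '' Set.Ioc x1 1)
      = sInf ((fun y => quasiVol fm U 0 (Function.update lo i x1) (Function.update hi i y))
        '' Set.Ioc x1 1) := by
  have hUne : U.Nonempty := ⟨i, hiU⟩
  set a : Fin d → ℝ := Function.update lo i x1 with ha
  set b : Fin d → ℝ := Function.update hi i x1 with hb
  have haIcc : ∀ j ∈ U, 0 ≤ a j ∧ a j ≤ 1 := by
    intro j hj
    by_cases hji : j = i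
    · subst hji; rw [ha, Function.update_self]; exact ⟨hx10, le_of_lt hx11⟩
    · rw [ha, Function.update_of_ne hji]
      exact ⟨hlo0 j hj hji, le_trans (hlohi j hj hji) (hhi1 j hj hji)⟩
  have hbIcc : ∀ j ∈ U, 0 ≤ b j ∧ b j ≤ 1 := by
    intro j hj
    by_cases hji : j = i
    · subst hji; rw [hb, Function.update_self]; exact ⟨hx10, le_of_lt hx11⟩
    · rw [hb, Function.update_of_ne hji]
      exact ⟨le_trans (hlo0 j hj hji) (hlohi j hj hji), hhi1 j hj hji⟩
  have hupdate : ∀ y : ℝ, Function.update b i y = Function.update hi i y := by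
    intro y; rw [hb, Function.update_idem]
  have htd : Filter.Tendsto (fun y => quasiVol f U 0 a (Function.update b i y))
      (nhdsWithin x1 (Set.Icc x1 1)) (nhds 0) :=
    tendsto_quasiVol_deg hrc hiU (by rw [ha, Function.update_self]) haIcc hbIcc
  have hclose0 := close_of_tendsto hx11 _ htd
  have hdecz : ∀ z ∈ Set.Ioc x1 1,
      quasiVol f U 0 a (Function.update hi i z)
        = quasiVol fp U 0 a (Function.update hi i z)
          - quasiVol fm U 0 a (Function.update hi i z) := by
    intro z hz
    refine quasiVol_dec' hdec hUne haIcc ?_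
    intro j hj
    by_cases hji : j = i
    · subst hji; rw [Function.update_self]
      exact ⟨le_trans hx10 (le_of_lt hz.1), hz.2⟩
    · rw [Function.update_of_ne hji]
      exact ⟨le_trans (hlo0 j hj hji) (hlohi j hj hji), hhi1 j hj hji⟩
  have hclose : ∀ ε > (0:ℝ), ∃ y ∈ Set.Ioc x1 1, ∀ z ∈ Set.Ioc x1 y,
      |quasiVol fp U 0 a (Function.update hi i z)
        - quasiVol fm U 0 a (Function.update hi i z)| < ε := by
    intro ε hε
    obtain ⟨y, hy, hyy⟩ := hclose0 ε hε
    refine ⟨y, hy, fun z hz => ?_⟩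
    have hzIoc : z ∈ Set.Ioc x1 1 := ⟨hz.1, le_trans hz.2 hy.2⟩
    have := hyy z hz
    rw [hupdate z, hdecz z hzIoc] at this
    exact this
  have hMp := colMono hfpcm hiU hx10 hlo0 hhi1 hlohi
  have hMm := colMono hfmcm hiU hx10 hlo0 hhi1 hlohi
  have hNp := colNonneg hfpcm hiU hx10 hlo0 hhi1 hlohi
  have hNm := colNonneg hfmcm hiU hx10 hlo0 hhi1 hlohi
  refine le_antisymm ?_ ?_
  · exact sInf_le_sInf_of_close hx11 _ _ hMm hNp hclose
  · refine sInf_le_sInf_of_close hx11 _ _ hMp hNm ?_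
    intro ε hε
    obtain ⟨y, hy, hyy⟩ := hclose ε hε
    exact ⟨y, hy, fun z hz => by rw [abs_sub_comm]; exact hyy z hz⟩

end HK
namespace HK
open Finset

variable {d : ℕ}

lemma perGrid (f fp fm : (Fin d → ℝ) → ℝ) (hrc : RightCts f)
    (hfpcm : CompletelyMonotone fp) (hfmcm : CompletelyMonotone fm)
    (hdec : ∀ z ∈ Set.Icc (0 : Fin d → ℝ) 1, f z = f 0 + fp z - fm z)
    {x : Fin d → ℝ} (hx : x ∈ Set.Icc (0:Fin d → ℝ) 1) {i : Fin d} (hxi : x i < 1)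
    {U : Finset (Fin d)} (hiU : i ∈ U) {c : ℝ} (hc0 : 0 ≤ c)
    (hcp : ∀ y ∈ Set.Ioc (x i) 1,
      c ≤ quasiVol fp U 0 (Function.update 0 i (x i)) (Function.update x i y))
    (hcm2 : ∀ y ∈ Set.Ioc (x i) 1,
      c ≤ quasiVol fm U 0 (Function.update 0 i (x i)) (Function.update x i y))
    (G : Grid d U 0 1) :
    gridSum f U 0 0 1 G ≤ quasiVol fp U 0 0 1 + quasiVol fm U 0 0 1 - 2 * c := by
  classical
  have hUne : U.Nonempty := ⟨i, hiU⟩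
  have hx0 : ∀ j, 0 ≤ x j := fun j => hx.1 j
  have hx1 : ∀ j, x j ≤ 1 := fun j => hx.2 j
  have hmid : (x i + 1)/2 ∈ Set.Ioc (x i) 1 := ⟨by linarith, by linarith [hx1 i]⟩
  -- c is at most the total fp and fm quasi-volumes
  have hwhole : ∀ g : (Fin d → ℝ) → ℝ, CompletelyMonotone g → ∀ y ∈ Set.Ioc (x i) 1,
      quasiVol g U 0 (Function.update 0 i (x i)) (Function.update x i y)
        ≤ quasiVol g U 0 0 1 := by
    intro g hg y hy
    refine quasiVol_mono_box hg hUne ?_ ?_ ?_ ?_ ?_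
    · intro j _; simp
    · intro j _
      by_cases hji : j = i
      · subst hji; rw [Function.update_self]; simpa using hx0 j
      · rw [Function.update_of_ne hji]
    · intro j _
      by_cases hji : j = i
      · subst hji; rw [Function.update_self, Function.update_self]; exact le_of_lt hy.1
      · rw [Function.update_of_ne hji, Function.update_of_ne hji]; simpa using hx0 j
    · intro j _
      by_cases hji : j = i
      · subst hji; rw [Function.update_self]; simpa using hy.2
      · rw [Function.update_of_ne hji]; simpa using hx1 j
    · intro j _; simp
  have hQp : c ≤ quasiVol fp U 0 0 1 :=
    le_trans (hcp _ hmid) (hwhole fp hfpcm _ hmid)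
  have hQm : c ≤ quasiVol fm U 0 0 1 :=
    le_trans (hcm2 _ hmid) (hwhole fm hfmcm _ hmid)
  by_cases hK : (Fintype.piFinset (fun j => Finset.range (if j ∈ U then G.m j else 1))).Nonempty
  swap
  · have hgs : gridSum f U 0 0 1 G = 0 := by
      unfold gridSum
      rw [Finset.not_nonempty_iff_eq_empty.1 hK, Finset.sum_empty]
    rw [hgs]; linarith
  have hm1 : ∀ j ∈ U, 1 ≤ G.m j := by
    obtain ⟨k₀, hk₀⟩ := hK
    intro j hj
    have := Fintype.mem_piFinset.1 hk₀ j
    rw [if_pos hj] at this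
    have := Finset.mem_range.1 this
    omega
  -- the layer index κ
  set κ := Nat.findGreatest (fun v => G.t i v ≤ x i) (G.m i - 1) with hκdef
  have hκle : κ ≤ G.m i - 1 := Nat.findGreatest_le _
  have hκlt : κ < G.m i := by have := hm1 i hiU; omega
  have hκspec : G.t i κ ≤ x i := by
    rw [hκdef]
    exact Nat.findGreatest_spec (P := fun v => G.t i v ≤ x i) (m := 0) (Nat.zero_le _)
      (by show G.t i 0 ≤ x i; rw [G.first i hiU]; simpa using hx0 i)
  have hκsucc : x i < G.t i (κ + 1) := by
    by_cases hcase : κ + 1 ≤ G.m i - 1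
    · by_contra hle
      push_neg at hle
      exact Nat.findGreatest_is_greatest (Nat.lt_succ_self κ) hcase hle
    · have hEq : κ + 1 = G.m i := by have := hm1 i hiU; omega
      rw [hEq, G.last i hiU]
      simpa using hxi
  set y₀ := G.t i (κ + 1) with hy₀def
  have hy₀ : y₀ ∈ Set.Ioc (x i) 1 :=
    ⟨hκsucc, (grid_t_bounds G hiU (by omega : κ + 1 ≤ G.m i)).2⟩

  -- clamped column data
  set lo' : (Fin d → ℕ) → Fin d → ℝ := fun k j => min (G.t j (k j)) (x j) with hlo'def
  set hi' : (Fin d → ℕ) → Fin d → ℝ := fun k j => min (G.t j (k j + 1)) (x j) with hhi'def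
  have hvalid : ∀ k : Fin d → ℕ, (∀ j ∈ U, j ≠ i → k j < G.m j) →
      (∀ j ∈ U, j ≠ i → 0 ≤ lo' k j) ∧ (∀ j ∈ U, j ≠ i → hi' k j ≤ 1)
        ∧ (∀ j ∈ U, j ≠ i → lo' k j ≤ hi' k j) := by
    intro k hk
    refine ⟨?_, ?_, ?_⟩
    · intro j hj hji
      exact le_min (grid_t_bounds G hj (le_of_lt (hk j hj hji))).1 (hx0 j)
    · intro j hj hji
      exact le_trans (min_le_right _ _) (hx1 j)
    · intro j hj hji
      exact min_le_min (G.mono j hj (k j) (k j + 1) (Nat.le_succ _) (hk j hj hji)) (le_refl _)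
  set colP : (Fin d → ℕ) → ℝ → ℝ := fun k y =>
    quasiVol fp U 0 (Function.update (lo' k) i (x i)) (Function.update (hi' k) i y) with hcolPdef
  set colM : (Fin d → ℕ) → ℝ → ℝ := fun k y =>
    quasiVol fm U 0 (Function.update (lo' k) i (x i)) (Function.update (hi' k) i y) with hcolMdef
  set muP : (Fin d → ℕ) → ℝ := fun k => sInf (colP k '' Set.Ioc (x i) 1) with hmuPdef
  set muM : (Fin d → ℕ) → ℝ := fun k => sInf (colM k '' Set.Ioc (x i) 1) with hmuMdef
  have hmueq : ∀ k : Fin d → ℕ, (∀ j ∈ U, j ≠ i → k j < G.m j) → muP k = muM k := by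
    intro k hk
    obtain ⟨h1, h2, h3⟩ := hvalid k hk
    exact col_sInf_eq hrc hfpcm hfmcm hdec hiU (hx0 i) hxi h1 h2 h3
  have hmuPle : ∀ k : Fin d → ℕ, (∀ j ∈ U, j ≠ i → k j < G.m j) →
      ∀ y ∈ Set.Ioc (x i) 1, muP k ≤ colP k y := by
    intro k hk y hy
    obtain ⟨h1, h2, h3⟩ := hvalid k hk
    refine csInf_le ⟨0, ?_⟩ ⟨y, hy, rfl⟩
    rintro _ ⟨z, hz, rfl⟩
    exact colNonneg hfpcm hiU (hx0 i) h1 h2 h3 z hz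
  have hmuMle : ∀ k : Fin d → ℕ, (∀ j ∈ U, j ≠ i → k j < G.m j) →
      ∀ y ∈ Set.Ioc (x i) 1, muM k ≤ colM k y := by
    intro k hk y hy
    obtain ⟨h1, h2, h3⟩ := hvalid k hk
    refine csInf_le ⟨0, ?_⟩ ⟨y, hy, rfl⟩
    rintro _ ⟨z, hz, rfl⟩
    exact colNonneg hfmcm hiU (hx0 i) h1 h2 h3 z hz
  have hmuP0 : ∀ k : Fin d → ℕ, (∀ j ∈ U, j ≠ i → k j < G.m j) → 0 ≤ muP k := by
    intro k hk
    obtain ⟨h1, h2, h3⟩ := hvalid k hk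
    refine le_csInf ⟨colP k 1, 1, ⟨hxi, le_refl 1⟩, rfl⟩ ?_
    rintro _ ⟨z, hz, rfl⟩
    exact colNonneg hfpcm hiU (hx0 i) h1 h2 h3 z hz
  -- cell quasivolumes
  set cellP : (Fin d → ℕ) → ℝ := fun k =>
    quasiVol fp U 0 (fun j => G.t j (k j)) (fun j => G.t j (k j + 1)) with hcellPdef
  set cellM : (Fin d → ℕ) → ℝ := fun k =>
    quasiVol fm U 0 (fun j => G.t j (k j)) (fun j => G.t j (k j + 1)) with hcellMdef
  have hcellbounds : ∀ k : Fin d → ℕ, (∀ j ∈ U, k j < G.m j) →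
      (∀ j ∈ U, 0 ≤ G.t j (k j)) ∧ (∀ j ∈ U, G.t j (k j + 1) ≤ 1)
        ∧ (∀ j ∈ U, G.t j (k j) ≤ G.t j (k j + 1)) := by
    intro k hk
    exact ⟨fun j hj => (grid_t_bounds G hj (le_of_lt (hk j hj))).1,
      fun j hj => (grid_t_bounds G hj (hk j hj)).2,
      fun j hj => G.mono j hj (k j) (k j + 1) (Nat.le_succ _) (hk j hj)⟩
  have hcellP0 : ∀ k : Fin d → ℕ, (∀ j ∈ U, k j < G.m j) → 0 ≤ cellP k := by
    intro k hk
    obtain ⟨h1, h2, h3⟩ := hcellbounds k hk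
    exact quasiVol_nonneg hfpcm hUne h1 h2 h3
  have hcellM0 : ∀ k : Fin d → ℕ, (∀ j ∈ U, k j < G.m j) → 0 ≤ cellM k := by
    intro k hk
    obtain ⟨h1, h2, h3⟩ := hcellbounds k hk
    exact quasiVol_nonneg hfmcm hUne h1 h2 h3
  -- the key min-bound for layer cells
  have hmincell : ∀ k : Fin d → ℕ, (∀ j ∈ U, j ≠ i → k j < G.m j) →
      muP k ≤ cellP (Function.update k i κ) ∧ muP k ≤ cellM (Function.update k i κ) := by
    intro k hk
    have hkv : ∀ j ∈ U, (Function.update k i κ) j < G.m j := by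
      intro j hj
      by_cases hji : j = i
      · subst hji; rw [Function.update_self]; exact hκlt
      · rw [Function.update_of_ne hji]; exact hk j hj hji
    obtain ⟨hv1, hv2, hv3⟩ := hvalid k hk
    by_cases hA : ∀ j ∈ U, j ≠ i → G.t j (k j) ≤ x j
    · have hsub : ∀ g : (Fin d → ℝ) → ℝ, CompletelyMonotone g →
          quasiVol g U 0 (Function.update (lo' k) i (x i)) (Function.update (hi' k) i y₀)
            ≤ quasiVol g U 0 (fun j => G.t j (Function.update k i κ j))
                (fun j => G.t j (Function.update k i κ j + 1)) := by
        intro g hg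
        refine quasiVol_mono_box hg hUne ?_ ?_ ?_ ?_ ?_
        · intro j hj
          exact (grid_t_bounds G hj (le_of_lt (hkv j hj))).1
        · intro j hj
          by_cases hji : j = i
          · subst hji
            rw [Function.update_self, Function.update_self]
            exact hκspec
          · rw [Function.update_of_ne hji, Function.update_of_ne hji]
            exact le_min (le_refl _) (hA j hj hji)
        · intro j hj
          by_cases hji : j = i
          · subst hji
            rw [Function.update_self, Function.update_self]
            exact le_of_lt hκsucc
          · rw [Function.update_of_ne hji, Function.update_of_ne hji]
            exact hv3 j hj hji
        · intro j hj
          by_cases hji : j = i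
          · subst hji
            rw [Function.update_self, Function.update_self]
          · rw [Function.update_of_ne hji, Function.update_of_ne hji]
            exact min_le_left _ _
        · intro j hj
          exact (grid_t_bounds G hj (hkv j hj)).2
      constructor
      · exact le_trans (hmuPle k hk y₀ hy₀) (hsub fp hfpcm)
      · rw [hmueq k hk]
        exact le_trans (hmuMle k hk y₀ hy₀) (hsub fm hfmcm)
    · push_neg at hA
      obtain ⟨j, hjU, hji, hjx⟩ := hA
      have hjne : j ≠ i := hji
      have hdegP : colP k 1 = 0 := by
        refine quasiVol_degenerate fp hjU ?_
        rw [Function.update_of_ne hjne, Function.update_of_ne hjne]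
        show min (G.t j (k j)) (x j) = min (G.t j (k j + 1)) (x j)
        rw [min_eq_right (le_of_lt hjx), min_eq_right
          (le_trans (le_of_lt hjx) (G.mono j hjU (k j) (k j + 1) (Nat.le_succ _) (hk j hjU hjne)))]
      have hmuP00 : muP k = 0 := by
        refine le_antisymm ?_ (hmuP0 k hk)
        calc muP k ≤ colP k 1 := hmuPle k hk 1 ⟨hxi, le_refl 1⟩
          _ = 0 := hdegP
      rw [hmuP00]
      exact ⟨hcellP0 _ hkv, hcellM0 _ hkv⟩

  -- the reduced index set
  set K' := Fintype.piFinset (Function.update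
      (fun j => Finset.range (if j ∈ U then G.m j else 1)) i ({0} : Finset ℕ)) with hK'def
  have hK'valid : ∀ k ∈ K', ∀ j ∈ U, j ≠ i → k j < G.m j := by
    intro k hkmem j hj hji
    have h := Fintype.mem_piFinset.1 hkmem j
    rw [Function.update_of_ne hji] at h
    rw [if_pos hj] at h
    exact Finset.mem_range.1 h
  have hK'ne : K'.Nonempty := by
    obtain ⟨k₀, hk₀⟩ := hK
    refine ⟨Function.update k₀ i 0, ?_⟩
    rw [hK'def, Fintype.mem_piFinset]
    intro j
    by_cases hji : j = i
    · subst hji; rw [Function.update_self, Function.update_self]; exact Finset.mem_singleton_self 0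
    · rw [Function.update_of_ne hji, Function.update_of_ne hji]
      exact Fintype.mem_piFinset.1 hk₀ j
  -- the column sum dominates c
  have hcolsum : c ≤ ∑ k ∈ K', muP k := by
    refine le_of_forall_pos_le_add fun ε hε => ?_
    set ε' := ε / (K'.card + 1) with hε'def
    have hε' : 0 < ε' := div_pos hε (by positivity)
    have hcommon : ∃ y ∈ Set.Ioc (x i) 1, ∀ k ∈ K', colP k y < muP k + ε' := by
      refine common_y K' hxi (fun k y => colP k y < muP k + ε') ?_ ?_
      · intro k hkmem y z hy hz hyz hQz
        obtain ⟨h1, h2, h3⟩ := hvalid k (hK'valid k hkmem)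
        exact lt_of_le_of_lt (colMono hfpcm hiU (hx0 i) h1 h2 h3 y z hy hz hyz) hQz
      · intro k hkmem
        have hne : (colP k '' Set.Ioc (x i) 1).Nonempty := ⟨colP k 1, 1, ⟨hxi, le_refl 1⟩, rfl⟩
        obtain ⟨a, ⟨y, hy, rfl⟩, hlt⟩ := Real.lt_sInf_add_pos hne hε'
        exact ⟨y, hy, hlt⟩
    obtain ⟨ystar, hystar, hcols⟩ := hcommon
    have htel : ∑ k ∈ K', colP k ystar
        = quasiVol fp U 0 (Function.update 0 i (x i)) (Function.update x i ystar) := by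
      have hidx : (fun j => Finset.range (if j ∈ U then (if j = i then 1 else G.m j) else 1))
          = Function.update (fun j => Finset.range (if j ∈ U then G.m j else 1)) i
              ({0} : Finset ℕ) := by
        funext j
        by_cases hji : j = i
        · subst hji
          rw [Function.update_self, if_pos hiU, if_pos rfl, Finset.range_one]
        · rw [Function.update_of_ne hji, if_neg hji]
      have htel0 := telescope fp U 0 (fun j => if j = i then 1 else G.m j)
        (fun j v => if j = i then (if v = 0 then x i else ystar) else min (G.t j v) (x j))
      calc ∑ k ∈ K', colP k ystar
          = ∑ k ∈ Fintype.piFinset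
              (fun j => Finset.range (if j ∈ U then (if j = i then 1 else G.m j) else 1)),
              quasiVol fp U 0
                (fun j => (fun j v => if j = i then (if v = 0 then x i else ystar)
                    else min (G.t j v) (x j)) j (k j))
                (fun j => (fun j v => if j = i then (if v = 0 then x i else ystar)
                    else min (G.t j v) (x j)) j (k j + 1)) := by
            rw [hK'def, ← hidx]
            refine Finset.sum_congr rfl fun k hkmem => ?_
            have hki : k i = 0 := by
              have h := Fintype.mem_piFinset.1 hkmem i
              rw [if_pos hiU, if_pos rfl, Finset.range_one] at h
              exact Finset.mem_singleton.1 h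
            refine quasiVol_congr fp U (fun _ _ => rfl) ?_ ?_
            · intro j hj
              by_cases hji : j = i
              · subst hji
                rw [Function.update_self]
                simp [hki]
              · rw [Function.update_of_ne hji]
                simp [hji, hlo'def]
            · intro j hj
              by_cases hji : j = i
              · subst hji
                rw [Function.update_self]
                simp [hki]
              · rw [Function.update_of_ne hji]
                simp [hji, hhi'def]
        _ = quasiVol fp U 0
              (fun j => (fun j v => if j = i then (if v = 0 then x i else ystar)
                  else min (G.t j v) (x j)) j 0)
              (fun j => (fun j v => if j = i then (if v = 0 then x i else ystar)
                  else min (G.t j v) (x j)) j ((fun j => if j = i then 1 else G.m j) j)) :=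
            htel0
        _ = quasiVol fp U 0 (Function.update 0 i (x i)) (Function.update x i ystar) := by
            refine quasiVol_congr fp U (fun _ _ => rfl) ?_ ?_
            · intro j hj
              by_cases hji : j = i
              · subst hji
                rw [Function.update_self]
                simp
              · rw [Function.update_of_ne hji]
                simp only [hji, if_false]
                rw [G.first j hj]
                simpa using min_eq_left (hx0 j)
            · intro j hj
              by_cases hji : j = i
              · subst hji
                rw [Function.update_self]
                simp
              · rw [Function.update_of_ne hji]
                simp only [hji, if_false]
                rw [G.last j hj]
                simpa using min_eq_right (hx1 j)
    have hcard : ((K'.card : ℝ) + 1) * ε' = ε := by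
      rw [hε'def]
      field_simp
    calc c ≤ quasiVol fp U 0 (Function.update 0 i (x i)) (Function.update x i ystar) :=
          hcp ystar hystar
      _ = ∑ k ∈ K', colP k ystar := htel.symm
      _ ≤ ∑ k ∈ K', (muP k + ε') := Finset.sum_le_sum fun k hk => le_of_lt (hcols k hk)
      _ = (∑ k ∈ K', muP k) + K'.card * ε' := by
          rw [Finset.sum_add_distrib, Finset.sum_const, nsmul_eq_mul]
      _ ≤ (∑ k ∈ K', muP k) + ε := by
          have : (K'.card : ℝ) * ε' ≤ ((K'.card : ℝ) + 1) * ε' := by nlinarith [hε'.le]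
          rw [← hcard]
          linarith
  -- final assembly
  have hsplitF := sum_piFinset_split i (fun j => Finset.range (if j ∈ U then G.m j else 1))
      (fun k => |quasiVol f U 0 (fun j => G.t j (k j)) (fun j => G.t j (k j + 1))|)
  have hsplitPM := sum_piFinset_split i (fun j => Finset.range (if j ∈ U then G.m j else 1))
      (fun k => cellP k + cellM k)
  simp only [if_pos hiU] at hsplitF hsplitPM
  have hbound : ∀ v ∈ Finset.range (G.m i),
      (∑ k ∈ K', |quasiVol f U 0 (fun j => G.t j (Function.update k i v j))
          (fun j => G.t j (Function.update k i v j + 1))|)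
        ≤ (∑ k ∈ K', (cellP (Function.update k i v) + cellM (Function.update k i v)))
          - (if v = κ then 2 * ∑ k ∈ K', muP k else 0) := by
    intro v hv
    have hvm : v < G.m i := Finset.mem_range.1 hv
    have hkv : ∀ k ∈ K', ∀ j ∈ U, Function.update k i v j < G.m j := by
      intro k hk j hj
      by_cases hji : j = i
      · subst hji; rw [Function.update_self]; exact hvm
      · rw [Function.update_of_ne hji]; exact hK'valid k hk j hj hji
    have hdecF : ∀ k ∈ K', quasiVol f U 0 (fun j => G.t j (Function.update k i v j))
        (fun j => G.t j (Function.update k i v j + 1))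
          = cellP (Function.update k i v) - cellM (Function.update k i v) := by
      intro k hk
      obtain ⟨h1, h2, h3⟩ := hcellbounds _ (hkv k hk)
      exact quasiVol_dec' hdec hUne
        (fun j hj => ⟨h1 j hj, le_trans (h3 j hj) (h2 j hj)⟩)
        (fun j hj => ⟨le_trans (h1 j hj) (h3 j hj), h2 j hj⟩)
    by_cases hvκ : v = κ
    · subst hvκ
      rw [if_pos rfl, Finset.mul_sum, ← Finset.sum_sub_distrib]
      refine Finset.sum_le_sum fun k hk => ?_
      obtain ⟨hmc1, hmc2⟩ := hmincell k (hK'valid k hk)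
      have hm0 := hmuP0 k (hK'valid k hk)
      rw [hdecF k hk]
      refine abs_le.2 ⟨by linarith, by linarith⟩
    · rw [if_neg hvκ, sub_zero]
      refine Finset.sum_le_sum fun k hk => ?_
      have hp0 := hcellP0 _ (hkv k hk)
      have hq0 := hcellM0 _ (hkv k hk)
      rw [hdecF k hk]
      refine abs_le.2 ⟨by linarith, by linarith⟩
  have htelP : (∑ k ∈ Fintype.piFinset (fun j => Finset.range (if j ∈ U then G.m j else 1)),
      cellP k) = quasiVol fp U 0 0 1 := by
    rw [hcellPdef]
    rw [telescope fp U 0 G.m G.t]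
    exact quasiVol_congr fp U (fun _ _ => rfl) (fun j hj => G.first j hj) (fun j hj => G.last j hj)
  have htelM : (∑ k ∈ Fintype.piFinset (fun j => Finset.range (if j ∈ U then G.m j else 1)),
      cellM k) = quasiVol fm U 0 0 1 := by
    rw [hcellMdef]
    rw [telescope fm U 0 G.m G.t]
    exact quasiVol_congr fm U (fun _ _ => rfl) (fun j hj => G.first j hj) (fun j hj => G.last j hj)
  have hfinal : gridSum f U 0 0 1 G
      ≤ (quasiVol fp U 0 0 1 + quasiVol fm U 0 0 1) - 2 * ∑ k ∈ K', muP k := by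
    unfold gridSum
    rw [hsplitF]
    calc (∑ v ∈ Finset.range (G.m i), ∑ k ∈ Fintype.piFinset (Function.update
            (fun j => Finset.range (if j ∈ U then G.m j else 1)) i ({0} : Finset ℕ)),
          |quasiVol f U 0 (fun j => G.t j (Function.update k i v j))
            (fun j => G.t j (Function.update k i v j + 1))|)
        ≤ ∑ v ∈ Finset.range (G.m i),
            ((∑ k ∈ K', (cellP (Function.update k i v) + cellM (Function.update k i v)))
              - (if v = κ then 2 * ∑ k ∈ K', muP k else 0)) := by
          refine Finset.sum_le_sum fun v hv => ?_
          rw [← hK'def]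
          exact hbound v hv
      _ = (∑ v ∈ Finset.range (G.m i),
            ∑ k ∈ K', (cellP (Function.update k i v) + cellM (Function.update k i v)))
          - (∑ v ∈ Finset.range (G.m i), if v = κ then 2 * ∑ k ∈ K', muP k else 0) :=
          Finset.sum_sub_distrib _ _
      _ = (quasiVol fp U 0 0 1 + quasiVol fm U 0 0 1) - 2 * ∑ k ∈ K', muP k := by
          congr 1
          · rw [hK'def, ← hsplitPM, ← htelP, ← htelM, ← Finset.sum_add_distrib]
          · rw [Finset.sum_ite_eq' (Finset.range (G.m i)) κ
              (fun _ => 2 * ∑ k ∈ K', muP k), if_pos (Finset.mem_range.2 hκlt)]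
  calc gridSum f U 0 0 1 G
      ≤ (quasiVol fp U 0 0 1 + quasiVol fm U 0 0 1) - 2 * ∑ k ∈ K', muP k := hfinal
    _ ≤ quasiVol fp U 0 0 1 + quasiVol fm U 0 0 1 - 2 * c := by linarith



end HK
namespace HK
open Finset

variable {d : ℕ}

lemma perGridWeak (f fp fm : (Fin d → ℝ) → ℝ)
    (hfpcm : CompletelyMonotone fp) (hfmcm : CompletelyMonotone fm)
    (hdec : ∀ z ∈ Set.Icc (0 : Fin d → ℝ) 1, f z = f 0 + fp z - fm z)
    {S : Finset (Fin d)} (hSne : S.Nonempty) (G : Grid d S 0 1) :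
    gridSum f S 0 0 1 G ≤ quasiVol fp S 0 0 1 + quasiVol fm S 0 0 1 := by
  unfold gridSum
  have hb : ∀ k ∈ Fintype.piFinset (fun j => Finset.range (if j ∈ S then G.m j else 1)),
      |quasiVol f S 0 (fun j => G.t j (k j)) (fun j => G.t j (k j + 1))|
        ≤ quasiVol fp S 0 (fun j => G.t j (k j)) (fun j => G.t j (k j + 1))
          + quasiVol fm S 0 (fun j => G.t j (k j)) (fun j => G.t j (k j + 1)) := by
    intro k hk
    have hkv : ∀ j ∈ S, k j < G.m j := fun j hj => mem_cellIndex hk hj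
    have h1 : ∀ j ∈ S, 0 ≤ G.t j (k j) := fun j hj =>
      (grid_t_bounds G hj (le_of_lt (hkv j hj))).1
    have h2 : ∀ j ∈ S, G.t j (k j + 1) ≤ 1 := fun j hj => (grid_t_bounds G hj (hkv j hj)).2
    have h3 : ∀ j ∈ S, G.t j (k j) ≤ G.t j (k j + 1) := fun j hj =>
      G.mono j hj (k j) (k j + 1) (Nat.le_succ _) (hkv j hj)
    have hdecF := quasiVol_dec' hdec hSne (a := fun j => G.t j (k j))
      (b := fun j => G.t j (k j + 1))
      (fun j hj => ⟨h1 j hj, le_trans (h3 j hj) (h2 j hj)⟩)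
      (fun j hj => ⟨le_trans (h1 j hj) (h3 j hj), h2 j hj⟩)
    have hp0 : 0 ≤ quasiVol fp S 0 (fun j => G.t j (k j)) (fun j => G.t j (k j + 1)) :=
      quasiVol_nonneg hfpcm hSne h1 h2 h3
    have hm0 : 0 ≤ quasiVol fm S 0 (fun j => G.t j (k j)) (fun j => G.t j (k j + 1)) :=
      quasiVol_nonneg hfmcm hSne h1 h2 h3
    rw [hdecF]
    exact abs_le.2 ⟨by linarith, by linarith⟩
  calc (∑ k ∈ Fintype.piFinset (fun j => Finset.range (if j ∈ S then G.m j else 1)),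
        |quasiVol f S 0 (fun j => G.t j (k j)) (fun j => G.t j (k j + 1))|)
      ≤ ∑ k ∈ Fintype.piFinset (fun j => Finset.range (if j ∈ S then G.m j else 1)),
          (quasiVol fp S 0 (fun j => G.t j (k j)) (fun j => G.t j (k j + 1))
            + quasiVol fm S 0 (fun j => G.t j (k j)) (fun j => G.t j (k j + 1))) :=
        Finset.sum_le_sum hb
    _ = quasiVol fp S 0 0 1 + quasiVol fm S 0 0 1 := by
        rw [Finset.sum_add_distrib, telescope fp S 0 G.m G.t, telescope fm S 0 G.m G.t]
        rw [quasiVol_congr fp S (fun _ _ => rfl) (fun j hj => G.first j hj)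
          (fun j hj => G.last j hj),
          quasiVol_congr fm S (fun _ _ => rfl) (fun j hj => G.first j hj)
          (fun j hj => G.last j hj)]

lemma wholeBound {g : (Fin d → ℝ) → ℝ} (hcm : CompletelyMonotone g)
    {x : Fin d → ℝ} (hx : x ∈ Set.Icc (0 : Fin d → ℝ) 1) {i : Fin d}
    {U : Finset (Fin d)} (hiU : i ∈ U) :
    ∀ y ∈ Set.Ioc (x i) 1,
      quasiVol g U 0 (Function.update 0 i (x i)) (Function.update x i y)
        ≤ quasiVol g U 0 0 1 := by
  have hUne : U.Nonempty := ⟨i, hiU⟩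
  intro y hy
  refine quasiVol_mono_box hcm hUne ?_ ?_ ?_ ?_ ?_
  · intro j _; simp
  · intro j _
    by_cases hji : j = i
    · subst hji; rw [Function.update_self]; simpa using hx.1 j
    · rw [Function.update_of_ne hji]
  · intro j _
    by_cases hji : j = i
    · subst hji; rw [Function.update_self, Function.update_self]; exact le_of_lt hy.1
    · rw [Function.update_of_ne hji, Function.update_of_ne hji]; simpa using hx.1 j
  · intro j _
    by_cases hji : j = i
    · subst hji; rw [Function.update_self]; simpa using hy.2
    · rw [Function.update_of_ne hji]; simpa using hx.2 j
  · intro j _; simp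

lemma varContra (f fp fm : (Fin d → ℝ) → ℝ) (hrc : RightCts f)
    (hfpcm : CompletelyMonotone fp) (hfmcm : CompletelyMonotone fm)
    (hfp0 : fp 0 = 0) (hfm0 : fm 0 = 0)
    (hdec : ∀ z ∈ Set.Icc (0 : Fin d → ℝ) 1, f z = f 0 + fp z - fm z)
    (hvar : hkVar0 f = hkVar0 fp + hkVar0 fm)
    {x : Fin d → ℝ} (hx : x ∈ Set.Icc (0 : Fin d → ℝ) 1) {i : Fin d} (hxi : x i < 1)
    {U : Finset (Fin d)} (hiU : i ∈ U) {c : ℝ} (hcpos : 0 < c)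
    (hcp : ∀ y ∈ Set.Ioc (x i) 1,
      c ≤ quasiVol fp U 0 (Function.update 0 i (x i)) (Function.update x i y))
    (hcm2 : ∀ y ∈ Set.Ioc (x i) 1,
      c ≤ quasiVol fm U 0 (Function.update 0 i (x i)) (Function.update x i y)) :
    False := by
  classical
  have hUne : U.Nonempty := ⟨i, hiU⟩
  have hmid : (x i + 1)/2 ∈ Set.Ioc (x i) 1 := ⟨by linarith, by linarith [hx.2 i]⟩
  have hQp : c ≤ quasiVol fp U 0 0 1 :=
    le_trans (hcp _ hmid) (wholeBound hfpcm hx hiU _ hmid)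
  have hQm : c ≤ quasiVol fm U 0 0 1 :=
    le_trans (hcm2 _ hmid) (wholeBound hfmcm hx hiU _ hmid)
  have hSbound : ∀ S ∈ (Finset.univ : Finset (Fin d)).powerset.erase ∅,
      vitaliVar f S 0 0 1 ≤ quasiVol fp S 0 0 1 + quasiVol fm S 0 0 1
        - (if S = U then 2*c else 0) := by
    intro S hS
    have hSne : S.Nonempty :=
      Finset.nonempty_iff_ne_empty.2 (Finset.mem_erase.1 hS).1
    have hp0 : 0 ≤ quasiVol fp S 0 0 1 :=
      quasiVol_nonneg hfpcm hSne (fun j _ => by simp) (fun j _ => by simp) (fun j _ => by simp)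
    have hm0 : 0 ≤ quasiVol fm S 0 0 1 :=
      quasiVol_nonneg hfmcm hSne (fun j _ => by simp) (fun j _ => by simp) (fun j _ => by simp)
    by_cases hSU : S = U
    · subst hSU
      rw [if_pos rfl]
      refine Real.sSup_le ?_ (by linarith)
      rintro _ ⟨G, rfl⟩
      exact perGrid f fp fm hrc hfpcm hfmcm hdec hx hxi hiU (le_of_lt hcpos) hcp hcm2 G
    · rw [if_neg hSU, sub_zero]
      refine Real.sSup_le ?_ (by linarith)
      rintro _ ⟨G, rfl⟩
      exact perGridWeak f fp fm hfpcm hfmcm hdec hSne G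
  have hsum : hkVar0 f ≤ hkVar0 fp + hkVar0 fm - 2*c := by
    unfold hkVar0 hkVarOn
    calc (∑ S ∈ (Finset.univ : Finset (Fin d)).powerset.erase ∅, vitaliVar f S 0 0 1)
        ≤ ∑ S ∈ (Finset.univ : Finset (Fin d)).powerset.erase ∅,
            (quasiVol fp S 0 0 1 + quasiVol fm S 0 0 1 - (if S = U then 2*c else 0)) :=
          Finset.sum_le_sum hSbound
      _ = (∑ S ∈ (Finset.univ : Finset (Fin d)).powerset.erase ∅,
            (quasiVol fp S 0 0 1 + quasiVol fm S 0 0 1))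
          - (∑ S ∈ (Finset.univ : Finset (Fin d)).powerset.erase ∅,
            (if S = U then 2*c else 0)) := Finset.sum_sub_distrib _ _
      _ = hkVar0 fp + hkVar0 fm - 2*c := by
          have hUerase : U ∈ (Finset.univ : Finset (Fin d)).powerset.erase ∅ :=
            Finset.mem_erase.2 ⟨Finset.nonempty_iff_ne_empty.1 hUne,
              Finset.mem_powerset.2 (Finset.subset_univ U)⟩
          rw [Finset.sum_ite_eq' _ U (fun _ => 2*c), if_pos hUerase]
          congr 1
          rw [Finset.sum_add_distrib]
          rw [Finset.sum_erase_eq_sub (Finset.empty_mem_powerset _),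
            Finset.sum_erase_eq_sub (Finset.empty_mem_powerset _)]
          rw [master fp 1, master fm 1, quasiVol_empty, quasiVol_empty]
          rw [cm_hkVar0 hfpcm hfp0, cm_hkVar0 hfmcm hfm0, hfp0, hfm0]
          norm_num
  rw [hvar] at hsum
  linarith

end HK
namespace HK
open Finset

variable {d : ℕ}

lemma key (f fp fm : (Fin d → ℝ) → ℝ) (hrc : RightCts f)
    (hfpcm : CompletelyMonotone fp) (hfmcm : CompletelyMonotone fm)
    (hfp0 : fp 0 = 0) (hfm0 : fm 0 = 0)
    (hdec : ∀ z ∈ Set.Icc (0 : Fin d → ℝ) 1, f z = f 0 + fp z - fm z)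
    (hvar : hkVar0 f = hkVar0 fp + hkVar0 fm) :
    RightCts fp := by
  classical
  intro x hx i
  by_cases hxi : x i = 1
  · have hIcc : Set.Icc (x i) 1 = {x i} := by rw [hxi]; exact Set.Icc_self 1
    rw [hIcc, nhdsWithin_singleton]
    have := tendsto_pure_nhds (fun y => fp (Function.update x i y)) (x i)
    simpa [Function.update_eq_self] using this
  have hxi1 : x i < 1 := lt_of_le_of_ne (hx.2 i) hxi
  have hx0i : (0:ℝ) ≤ x i := hx.1 i
  -- the one-sided jumps along each face through x
  have hlo0 : ∀ (U : Finset (Fin d)), ∀ j ∈ U, j ≠ i → (0:ℝ) ≤ (0 : Fin d → ℝ) j :=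
    fun U j _ _ => le_refl 0
  have hhi1 : ∀ (U : Finset (Fin d)), ∀ j ∈ U, j ≠ i → x j ≤ 1 := fun U j _ _ => hx.2 j
  have hlohi : ∀ (U : Finset (Fin d)), ∀ j ∈ U, j ≠ i → (0 : Fin d → ℝ) j ≤ x j :=
    fun U j _ _ => hx.1 j
  have hjzero : ∀ U : Finset (Fin d), i ∈ U →
      sInf ((fun y => quasiVol fp U 0 (Function.update 0 i (x i)) (Function.update x i y))
        '' Set.Ioc (x i) 1) = 0 := by
    intro U hiU
    by_contra hne
    have hnonneg : ∀ y ∈ Set.Ioc (x i) 1,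
        0 ≤ quasiVol fp U 0 (Function.update 0 i (x i)) (Function.update x i y) :=
      colNonneg hfpcm hiU hx0i (hlo0 U) (hhi1 U) (hlohi U)
    have h0 : 0 ≤ sInf ((fun y => quasiVol fp U 0 (Function.update 0 i (x i))
        (Function.update x i y)) '' Set.Ioc (x i) 1) := by
      refine le_csInf ⟨_, 1, ⟨hxi1, le_refl 1⟩, rfl⟩ ?_
      rintro _ ⟨z, hz, rfl⟩
      exact hnonneg z hz
    have hpos : 0 < sInf ((fun y => quasiVol fp U 0 (Function.update 0 i (x i))
        (Function.update x i y)) '' Set.Ioc (x i) 1) := lt_of_le_of_ne h0 (Ne.symm hne)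
    have hjple : ∀ y ∈ Set.Ioc (x i) 1,
        sInf ((fun y => quasiVol fp U 0 (Function.update 0 i (x i))
          (Function.update x i y)) '' Set.Ioc (x i) 1)
        ≤ quasiVol fp U 0 (Function.update 0 i (x i)) (Function.update x i y) := by
      intro y hy
      refine csInf_le ⟨0, ?_⟩ ⟨y, hy, rfl⟩
      rintro _ ⟨z, hz, rfl⟩
      exact hnonneg z hz
    have hjmeq := col_sInf_eq hrc hfpcm hfmcm hdec hiU hx0i hxi1
      (hlo0 U) (hhi1 U) (hlohi U)
    have hnonnegm : ∀ y ∈ Set.Ioc (x i) 1,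
        0 ≤ quasiVol fm U 0 (Function.update 0 i (x i)) (Function.update x i y) :=
      colNonneg hfmcm hiU hx0i (hlo0 U) (hhi1 U) (hlohi U)
    have hjmle : ∀ y ∈ Set.Ioc (x i) 1,
        sInf ((fun y => quasiVol fp U 0 (Function.update 0 i (x i))
          (Function.update x i y)) '' Set.Ioc (x i) 1)
        ≤ quasiVol fm U 0 (Function.update 0 i (x i)) (Function.update x i y) := by
      intro y hy
      rw [hjmeq]
      refine csInf_le ⟨0, ?_⟩ ⟨y, hy, rfl⟩
      rintro _ ⟨z, hz, rfl⟩
      exact hnonnegm z hz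
    exact varContra f fp fm hrc hfpcm hfmcm hfp0 hfm0 hdec hvar hx hxi1 hiU hpos hjple hjmle
  -- now prove the limit
  rw [Metric.tendsto_nhdsWithin_nhds]
  intro ε hε
  set N : ℕ := ((Finset.univ : Finset (Fin d)).powerset).card with hN
  set ε' := ε / (N + 1) with hε'def
  have hε' : 0 < ε' := div_pos hε (by positivity)
  have hcommon : ∃ y ∈ Set.Ioc (x i) 1, ∀ U ∈ (Finset.univ : Finset (Fin d)).powerset,
      i ∈ U → quasiVol fp U 0 (Function.update 0 i (x i)) (Function.update x i y) < ε' := by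
    refine common_y _ hxi1 (fun U y => i ∈ U →
      quasiVol fp U 0 (Function.update 0 i (x i)) (Function.update x i y) < ε') ?_ ?_
    · intro U _ y z hy hz hyz hQ hiU
      exact lt_of_le_of_lt
        (colMono hfpcm hiU hx0i (hlo0 U) (hhi1 U) (hlohi U) y z hy hz hyz) (hQ hiU)
    · intro U _
      by_cases hiU : i ∈ U
      · have hne : ((fun y => quasiVol fp U 0 (Function.update 0 i (x i))
            (Function.update x i y)) '' Set.Ioc (x i) 1).Nonempty :=
          ⟨_, 1, ⟨hxi1, le_refl 1⟩, rfl⟩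
        obtain ⟨a, ⟨y, hy, rfl⟩, hlt⟩ := Real.lt_sInf_add_pos hne hε'
        rw [hjzero U hiU, zero_add] at hlt
        exact ⟨y, hy, fun _ => hlt⟩
      · exact ⟨1, ⟨hxi1, le_refl 1⟩, fun h => absurd h hiU⟩
  obtain ⟨y₀, hy₀, hvals⟩ := hcommon
  refine ⟨y₀ - x i, by linarith [hy₀.1], ?_⟩
  intro z hz hdist
  rcases eq_or_lt_of_le hz.1 with heq | hlt
  · rw [← heq]
    simp [Function.update_eq_self, dist_self]
    exact hε
  · have hzy : z < y₀ := by
      rw [Real.dist_eq, abs_of_nonneg (by linarith : (0:ℝ) ≤ z - x i)] at hdist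
      linarith
    have hzIoc : z ∈ Set.Ioc (x i) 1 := ⟨hlt, hz.2⟩
    have hdiff := coord_diff fp x i (x i) z
    rw [Function.update_eq_self] at hdiff
    have hterm : ∀ U ∈ (Finset.univ : Finset (Fin d)).powerset,
        (if i ∈ U then quasiVol fp U 0 (Function.update 0 i (x i))
          (Function.update x i z) else 0) ≤ ε' ∧
        0 ≤ (if i ∈ U then quasiVol fp U 0 (Function.update 0 i (x i))
          (Function.update x i z) else 0) := by
      intro U hU
      by_cases hiU : i ∈ U
      · rw [if_pos hiU]
        constructor
        · refine le_of_lt (lt_of_le_of_lt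
            (colMono hfpcm hiU hx0i (hlo0 U) (hhi1 U) (hlohi U) z y₀ hzIoc hy₀
              (le_of_lt hzy)) (hvals U hU hiU))
        · exact colNonneg hfpcm hiU hx0i (hlo0 U) (hhi1 U) (hlohi U) z hzIoc
      · rw [if_neg hiU]
        exact ⟨le_of_lt hε', le_refl 0⟩
    have hsumub : fp (Function.update x i z) - fp x ≤ N * ε' := by
      rw [hdiff]
      calc (∑ U ∈ (Finset.univ : Finset (Fin d)).powerset,
            (if i ∈ U then quasiVol fp U 0 (Function.update 0 i (x i))
              (Function.update x i z) else 0))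
          ≤ ∑ _U ∈ (Finset.univ : Finset (Fin d)).powerset, ε' :=
            Finset.sum_le_sum fun U hU => (hterm U hU).1
        _ = N * ε' := by rw [Finset.sum_const, nsmul_eq_mul, hN]
    have hsumlb : 0 ≤ fp (Function.update x i z) - fp x := by
      rw [hdiff]
      exact Finset.sum_nonneg fun U hU => (hterm U hU).2
    have hNe : (N:ℝ) * ε' < ε := by
      have h1 : ((N:ℝ) + 1) * ε' = ε := by rw [hε'def]; field_simp
      nlinarith [hε']
    rw [Real.dist_eq, abs_of_nonneg hsumlb]
    linarith

end HK
namespace HK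
open Finset

variable {d : ℕ}

lemma quasiVol_flip (f : (Fin d → ℝ) → ℝ) (c : ℝ) {S : Finset (Fin d)} (hS : S.Nonempty)
    (p a b : Fin d → ℝ) :
    quasiVol (fun z => c - f z) S p a b = - quasiVol f S p a b := by
  unfold quasiVol
  have hzero : (∑ T ∈ S.powerset, (-1 : ℝ) ^ T.card * c) = 0 := by
    rw [← Finset.sum_mul]
    have h2 : ((∑ m ∈ S.powerset, (-1 : ℤ) ^ m.card : ℤ) : ℝ)
        = ∑ m ∈ S.powerset, (-1 : ℝ) ^ m.card := by push_cast; ring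
    rw [← h2, Finset.sum_powerset_neg_one_pow_card_of_nonempty hS]
    norm_num
  have : (∑ T ∈ S.powerset, (-1 : ℝ) ^ T.card *
      (c - f (fun i => if i ∈ S then (if i ∈ T then a i else b i) else p i)))
      = (∑ T ∈ S.powerset, (-1 : ℝ) ^ T.card * c)
        - ∑ T ∈ S.powerset, (-1 : ℝ) ^ T.card *
            f (fun i => if i ∈ S then (if i ∈ T then a i else b i) else p i) := by
    rw [← Finset.sum_sub_distrib]
    exact Finset.sum_congr rfl fun T _ => by ring
  rw [this, hzero, zero_sub]

lemma hkVar0_flip (f : (Fin d → ℝ) → ℝ) (c : ℝ) :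
    hkVar0 (fun z => c - f z) = hkVar0 f := by
  unfold hkVar0 hkVarOn
  refine Finset.sum_congr rfl fun S hS => ?_
  have hSne : S.Nonempty := Finset.nonempty_iff_ne_empty.2 (Finset.mem_erase.1 hS).1
  unfold vitaliVar
  congr 1
  have : gridSum (fun z => c - f z) S 0 0 1 = gridSum f S 0 0 1 := by
    funext G
    unfold gridSum
    refine Finset.sum_congr rfl fun k _ => ?_
    rw [quasiVol_flip f c hSne, abs_neg]
  rw [this]

end HK

/-- If `f` is right-continuous, then the two components of its Jordan decomposition are
right-continuous as well. -/
theorem stmt17 {d : ℕ} (f fp fm : (Fin d → ℝ) → ℝ) (hrc : RightCts f) (hbv : BddHKVar f)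
    (hfpcm : CompletelyMonotone fp) (hfmcm : CompletelyMonotone fm)
    (hfp0 : fp 0 = 0) (hfm0 : fm 0 = 0)
    (hdec : ∀ x ∈ Set.Icc (0 : Fin d → ℝ) 1, f x = f 0 + fp x - fm x)
    (hvar : hkVar0 f = hkVar0 fp + hkVar0 fm) :
    RightCts fp ∧ RightCts fm := by
  constructor
  · exact HK.key f fp fm hrc hfpcm hfmcm hfp0 hfm0 hdec hvar
  · refine HK.key (fun z => 2 * f 0 - f z) fm fp ?_ hfmcm hfpcm hfm0 hfp0 ?_ ?_
    · intro x hx i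
      have := hrc x hx i
      have h2 : Filter.Tendsto (fun y => 2 * f 0 - f (Function.update x i y))
          (nhdsWithin (x i) (Set.Icc (x i) 1)) (nhds (2 * f 0 - f x)) :=
        Filter.Tendsto.sub tendsto_const_nhds this
      exact h2
    · intro z hz
      have hd := hdec z hz
      show 2 * f 0 - f z = (2 * f 0 - f 0) + fm z - fp z
      rw [hd]
      ring
    · rw [HK.hkVar0_flip f (2 * f 0), hvar]
      ring
end
end

section
/- Let μ be a normalized Borel measure on [0,1]^d whose distribution function G satisfies G(x_1,…,x_d) = ∏_{s=1}^d G_s(x_s) for one-dimensional distribution functions G_1,…,G_d of normalized Borel measures on [0,1]. Let G_s^{-1}(y) = min{x ∈ [0,1] : G_s(x) ≥ y} be the pseudo-inverse of G_s, and let T(x_1,…,x_d) = (G_1^{-1}(x_1),…,G_d^{-1}(x_d)). Then for any points x_1,…,x_N ∈ [0,1]^d, D_N*(T(x_1),…,T(x_N);μ) ≤ D_N*(x_1,…,x_N). If in addition all the functions G_1,…,G_d are invertible, then equality holds. -/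
open MeasureTheory Finset

noncomputable section

/-- Transformation of point sets for product measures: the star-discrepancy of the transformed
point set with respect to `μ` is at most the (uniform) star-discrepancy of the original point
set, with equality when all the one-dimensional distribution functions are invertible. -/
theorem stmt18 {d : ℕ} (N : ℕ) (hN : 0 < N) (μ : Measure (Fin d → ℝ))
    [IsProbabilityMeasure μ] (hμ : μ (Set.Icc (0 : Fin d → ℝ) 1) = 1)
    (μs : Fin d → Measure ℝ) [∀ s, IsProbabilityMeasure (μs s)]
    (hμs : ∀ s, μs s (Set.Icc (0 : ℝ) 1) = 1)
    (hprod : ∀ x ∈ Set.Icc (0 : Fin d → ℝ) 1,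
      μ (Set.Icc 0 x) = ∏ s : Fin d, μs s (Set.Icc 0 (x s)))
    (Ginv : Fin d → ℝ → ℝ)
    (hGinv : ∀ s : Fin d, ∀ y ∈ Set.Icc (0 : ℝ) 1,
      IsLeast {t : ℝ | t ∈ Set.Icc (0 : ℝ) 1 ∧ y ≤ (μs s (Set.Icc 0 t)).toReal} (Ginv s y))
    (x : Fin N → Fin d → ℝ) (hx : ∀ n, x n ∈ Set.Icc (0 : Fin d → ℝ) 1) :
    starDisc N (fun n i => Ginv i (x n i)) μ ≤ starDisc N x volume ∧
    ((∀ s : Fin d, Set.BijOn (fun t : ℝ => (μs s (Set.Icc 0 t)).toReal)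
        (Set.Icc (0 : ℝ) 1) (Set.Icc (0 : ℝ) 1)) →
      starDisc N (fun n i => Ginv i (x n i)) μ = starDisc N x volume) := by
  
  classical
  haveI : Nonempty (Set.Icc (0 : Fin d → ℝ) 1) :=
    ⟨⟨0, Set.left_mem_Icc.mpr zero_le_one⟩⟩
  set G : Fin d → ℝ → ℝ := fun s t => (μs s (Set.Icc 0 t)).toReal with hGdef
  have hGmono : ∀ s, ∀ t₁ t₂ : ℝ, t₁ ≤ t₂ → G s t₁ ≤ G s t₂ := fun s t₁ t₂ h =>
    ENNReal.toReal_mono (measure_ne_top _ _) (measure_mono (Set.Icc_subset_Icc_right h))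
  have hG0 : ∀ s t, 0 ≤ G s t := fun s t => ENNReal.toReal_nonneg
  have hG1 : ∀ s t, G s t ≤ 1 := by
    intro s t
    have := ENNReal.toReal_mono ENNReal.one_ne_top (prob_le_one (μ := μs s) (s := Set.Icc 0 t))
    simpa using this
  -- key Galois property
  have key : ∀ (s : Fin d) (y : ℝ), y ∈ Set.Icc (0:ℝ) 1 → ∀ t ∈ Set.Icc (0:ℝ) 1,
      (Ginv s y ≤ t ↔ y ≤ G s t) := by
    intro s y hy t ht
    obtain ⟨⟨hmem, hle⟩, hlb⟩ := hGinv s y hy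
    constructor
    · intro h; exact hle.trans (hGmono s _ _ h)
    · intro h; exact hlb ⟨ht, h⟩
  -- the map on boxes
  set φ : Set.Icc (0 : Fin d → ℝ) 1 → Set.Icc (0 : Fin d → ℝ) 1 := fun a =>
    ⟨fun s => G s ((a : Fin d → ℝ) s),
      Set.mem_Icc.mpr ⟨fun s => hG0 s _, fun s => hG1 s _⟩⟩ with hφdef
  set f1 : Set.Icc (0 : Fin d → ℝ) 1 → ℝ := fun a =>
    |(∑ n : Fin N, Set.indicator (Set.Icc 0 (a : Fin d → ℝ)) (fun _ => (1 : ℝ))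
        (fun i => Ginv i (x n i))) / N - (μ (Set.Icc 0 (a : Fin d → ℝ))).toReal| with hf1
  set f2 : Set.Icc (0 : Fin d → ℝ) 1 → ℝ := fun a =>
    |(∑ n : Fin N, Set.indicator (Set.Icc 0 (a : Fin d → ℝ)) (fun _ => (1 : ℝ)) (x n)) / N
      - (volume (Set.Icc 0 (a : Fin d → ℝ))).toReal| with hf2
  have hs1 : starDisc N (fun n i => Ginv i (x n i)) μ = ⨆ a, f1 a := rfl
  have hs2 : starDisc N x volume = ⨆ a, f2 a := rfl
  -- key term identity
  have hterm : ∀ a, f1 a = f2 (φ a) := by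
    intro a
    obtain ⟨ha0, ha1⟩ := Set.mem_Icc.mp a.2
    have hsum : ∀ n : Fin N,
        Set.indicator (Set.Icc 0 (a : Fin d → ℝ)) (fun _ => (1 : ℝ)) (fun i => Ginv i (x n i))
          = Set.indicator (Set.Icc 0 ((φ a : Set.Icc (0:Fin d→ℝ) 1) : Fin d → ℝ))
            (fun _ => (1 : ℝ)) (x n) := by
      intro n
      obtain ⟨hx0, hx1⟩ := Set.mem_Icc.mp (hx n)
      have hiff : ((fun i => Ginv i (x n i)) ∈ Set.Icc 0 (a : Fin d → ℝ)) ↔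
          (x n ∈ Set.Icc 0 ((φ a : Set.Icc (0:Fin d→ℝ) 1) : Fin d → ℝ)) := by
        simp only [Set.mem_Icc, Pi.le_def]
        constructor
        · rintro ⟨-, h2⟩
          refine ⟨fun i => hx0 i, fun i => ?_⟩
          exact (key i (x n i) ⟨hx0 i, hx1 i⟩ ((a:Fin d→ℝ) i) ⟨ha0 i, ha1 i⟩).mp (h2 i)
        · rintro ⟨-, h2⟩
          refine ⟨fun i => (hGinv i (x n i) ⟨hx0 i, hx1 i⟩).1.1.1, fun i => ?_⟩
          exact (key i (x n i) ⟨hx0 i, hx1 i⟩ ((a:Fin d→ℝ) i) ⟨ha0 i, ha1 i⟩).mpr (h2 i)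
      simp only [Set.indicator_apply]
      rw [if_congr hiff rfl rfl]
    have hmeas : (μ (Set.Icc 0 (a : Fin d → ℝ))).toReal
        = (volume (Set.Icc 0 ((φ a : Set.Icc (0:Fin d→ℝ) 1) : Fin d → ℝ))).toReal := by
      rw [hprod _ a.2, Real.volume_Icc_pi_toReal (by intro i; exact hG0 i _),
        ENNReal.toReal_prod]
      simp [φ]
      rfl
    have hs : (∑ n : Fin N, Set.indicator (Set.Icc 0 (a : Fin d → ℝ)) (fun _ => (1 : ℝ))
        (fun i => Ginv i (x n i)))
        = ∑ n : Fin N, Set.indicator (Set.Icc 0 ((φ a : Set.Icc (0:Fin d→ℝ) 1) : Fin d → ℝ))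
            (fun _ => (1 : ℝ)) (x n) := Finset.sum_congr rfl fun n _ => hsum n
    simp only [hf1, hf2]
    rw [hmeas, hs]
  -- boundedness
  have hbdd : ∀ g : Set.Icc (0 : Fin d → ℝ) 1 → ℝ,
      (g = f1 ∨ g = f2) → BddAbove (Set.range g) := by
    intro g hg
    refine ⟨2, Set.forall_mem_range.mpr fun a => ?_⟩
    have hboundgen : ∀ (pts : Fin N → Fin d → ℝ) (c : ℝ), 0 ≤ c → c ≤ 1 →
        |(∑ n : Fin N, Set.indicator (Set.Icc 0 (a : Fin d → ℝ)) (fun _ => (1:ℝ)) (pts n)) / N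
          - c| ≤ 2 := by
      intro pts c hc0 hc1
      have hsle : (∑ n : Fin N, Set.indicator (Set.Icc 0 (a : Fin d → ℝ)) (fun _ => (1:ℝ))
          (pts n)) ≤ N := by
        calc (∑ n : Fin N, Set.indicator (Set.Icc 0 (a : Fin d → ℝ)) (fun _ => (1:ℝ)) (pts n))
            ≤ ∑ _n : Fin N, (1:ℝ) := by
              refine Finset.sum_le_sum fun n _ => ?_
              by_cases h : pts n ∈ Set.Icc 0 (a : Fin d → ℝ) <;> simp [Set.indicator_apply, h]
          _ = N := by simp
      have hsge : (0:ℝ) ≤ ∑ n : Fin N, Set.indicator (Set.Icc 0 (a : Fin d → ℝ))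
          (fun _ => (1:ℝ)) (pts n) := by
        refine Finset.sum_nonneg fun n _ => ?_
        by_cases h : pts n ∈ Set.Icc 0 (a : Fin d → ℝ) <;> simp [Set.indicator_apply, h]
      have hNpos : (0:ℝ) < N := by exact_mod_cast hN
      rw [abs_sub_le_iff]
      constructor
      · have : (∑ n : Fin N, Set.indicator (Set.Icc 0 (a : Fin d → ℝ)) (fun _ => (1:ℝ))
            (pts n)) / N ≤ 1 := by
          rw [div_le_one hNpos]; exact hsle
        linarith
      · have : (0:ℝ) ≤ (∑ n : Fin N, Set.indicator (Set.Icc 0 (a : Fin d → ℝ))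
            (fun _ => (1:ℝ)) (pts n)) / N := div_nonneg hsge hNpos.le
        linarith
    rcases hg with rfl | rfl
    · exact hboundgen _ _ ENNReal.toReal_nonneg (by
        have := ENNReal.toReal_mono ENNReal.one_ne_top
          (prob_le_one (μ := μ) (s := Set.Icc 0 (a : Fin d → ℝ)))
        simpa using this)
    · refine hboundgen _ _ ENNReal.toReal_nonneg ?_
      obtain ⟨ha0, ha1⟩ := Set.mem_Icc.mp a.2
      rw [Real.volume_Icc_pi_toReal ha0]
      calc ∏ i, ((a:Fin d→ℝ) i - 0) ≤ ∏ i, (1:ℝ) := by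
            refine Finset.prod_le_prod (fun i _ => by simpa using ha0 i)
              (fun i _ => by simpa using ha1 i)
        _ = 1 := by simp
  have hle : starDisc N (fun n i => Ginv i (x n i)) μ ≤ starDisc N x volume := by
    rw [hs1, hs2]
    exact ciSup_le fun a => (hterm a) ▸ le_ciSup (hbdd f2 (Or.inr rfl)) (φ a)
  refine ⟨hle, fun hbij => le_antisymm hle ?_⟩
  rw [hs1, hs2]
  refine ciSup_le fun b => ?_
  obtain ⟨hb0, hb1⟩ := Set.mem_Icc.mp b.2
  have hchoice : ∀ s : Fin d, ∃ t ∈ Set.Icc (0:ℝ) 1, G s t = (b : Fin d → ℝ) s := by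
    intro s
    have : (b : Fin d → ℝ) s ∈ Set.Icc (0:ℝ) 1 := ⟨hb0 s, hb1 s⟩
    obtain ⟨t, ht, hGt⟩ := (hbij s).surjOn this
    exact ⟨t, ht, hGt⟩
  choose t ht hGt using hchoice
  have hta : t ∈ Set.Icc (0 : Fin d → ℝ) 1 :=
    Set.mem_Icc.mpr ⟨fun i => (ht i).1, fun i => (ht i).2⟩
  have hφ : φ ⟨t, hta⟩ = b := by
    apply Subtype.ext
    funext s
    exact hGt s
  calc f2 b = f1 ⟨t, hta⟩ := by rw [hterm ⟨t, hta⟩, hφ]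
    _ ≤ ⨆ a, f1 a := le_ciSup (hbdd f1 (Or.inl rfl)) _
end
end

section
/- Chelson's claimed invariance of the discrepancy under the Rosenblatt transformation fails: let d=2, let g be the probability density on [0,1]^2 with g(y_1,y_2)=1/2 if y_1 ≤ y_2 and g(y_1,y_2)=3/2 if y_1 > y_2, and let μ_G be the corresponding Borel probability measure. Then the marginal distribution function is G_1(y_1)=(y_1²+y_1)/2, and the conditional distribution function is G_2(y_2|y_1)=(y_2+2y_1)/(1+2y_1) if y_1 ≤ y_2 and G_2(y_2|y_1)=3y_2/(1+2y_1) if y_1 > y_2. For the single point x=(56/81, 20/23), the Rosenblatt transform z=(G_1^{-1}(x_1), G_2^{-1}(x_2|z_1)) equals (7/9, 20/27), and the star-discrepancies satisfy D_1*(z;μ_G)=610/729 while D_1*(x)=20/23; in particular D_1*(z;μ_G) ≠ D_1*(x). -/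
open MeasureTheory Finset

noncomputable section

namespace Stmt19Aux

def Mfun (a₀ a₁ : ℝ) : ℝ := if a₀ ≤ a₁ then (a₀^2 + a₀*a₁)/2 else (3*a₀*a₁ - a₁^2)/2

lemma Mfun_nonneg {a₀ a₁ : ℝ} (h0 : 0 ≤ a₀) (h1 : 0 ≤ a₁) : 0 ≤ Mfun a₀ a₁ := by
  unfold Mfun; split_ifs with h
  · nlinarith
  · push_neg at h; nlinarith

lemma inner1d (x c : ℝ) (hx : 0 ≤ x) (hc : 0 ≤ c) :
    ∫ y in Set.Icc (0:ℝ) c, (if x ≤ y then (1:ℝ)/2 else 3/2) =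
      if x ≤ c then x + c/2 else 3*c/2 := by
  have hmble : Measurable fun y : ℝ => (if x ≤ y then (1:ℝ)/2 else 3/2) :=
    Measurable.ite measurableSet_Ici measurable_const measurable_const
  by_cases h : x ≤ c
  · have hsplit : Set.Icc (0:ℝ) c = Set.Ico 0 x ∪ Set.Icc x c :=
      (Set.Ico_union_Icc_eq_Icc hx h).symm
    rw [hsplit, setIntegral_union]
    · have h1 : ∫ y in Set.Ico (0:ℝ) x, (if x ≤ y then (1:ℝ)/2 else 3/2) =
          ∫ y in Set.Ico (0:ℝ) x, (3/2 : ℝ) := by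
        apply setIntegral_congr_fun measurableSet_Ico
        intro y hy
        simp [not_le.mpr hy.2]
      have h2 : ∫ y in Set.Icc x c, (if x ≤ y then (1:ℝ)/2 else 3/2) =
          ∫ y in Set.Icc x c, (1/2 : ℝ) := by
        apply setIntegral_congr_fun measurableSet_Icc
        intro y hy
        simp [hy.1]
      rw [h1, h2, setIntegral_const, setIntegral_const, Real.volume_real_Ico_of_le hx,
        Real.volume_real_Icc_of_le h, if_pos h]
      simp only [smul_eq_mul]; ring
    · exact Set.disjoint_left.mpr fun y hy1 hy2 => absurd hy2.1 (not_le.mpr hy1.2)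
    · exact measurableSet_Icc
    · exact (Measure.integrableOn_of_bounded (by simp [Real.volume_Ico])
        hmble.aestronglyMeasurable (M := 3/2)
        (Filter.Eventually.of_forall fun y => by dsimp; split <;> rw [abs_of_nonneg] <;> norm_num))
    · exact (Measure.integrableOn_of_bounded (by simp [Real.volume_Icc])
        hmble.aestronglyMeasurable (M := 3/2)
        (Filter.Eventually.of_forall fun y => by dsimp; split <;> rw [abs_of_nonneg] <;> norm_num))
  · have h2 : ∫ y in Set.Icc (0:ℝ) c, (if x ≤ y then (1:ℝ)/2 else 3/2) =
        ∫ y in Set.Icc (0:ℝ) c, (3/2 : ℝ) := by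
      apply setIntegral_congr_fun measurableSet_Icc
      intro y hy
      have : ¬ x ≤ y := fun hxy => h (hxy.trans hy.2)
      simp [this]
    rw [h2, setIntegral_const, Real.volume_real_Icc_of_le hc, if_neg h]
    simp only [smul_eq_mul]; ring

lemma interval_g (x c : ℝ) (hx : 0 ≤ x) (hc : 0 ≤ c) :
    ∫ u in (0:ℝ)..c, (if x ≤ u then (1:ℝ)/2 else 3/2) =
      if x ≤ c then x + c/2 else 3*c/2 := by
  rw [intervalIntegral.integral_of_le hc, ← MeasureTheory.integral_Icc_eq_integral_Ioc]
  exact inner1d x c hx hc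

lemma outer1d (a₀ a₁ : ℝ) (h0 : 0 ≤ a₀) (h1 : 0 ≤ a₁) :
    ∫ x in Set.Icc (0:ℝ) a₀, (if x ≤ a₁ then x + a₁/2 else 3*a₁/2) = Mfun a₀ a₁ := by
  have hfun : (fun x : ℝ => if x ≤ a₁ then x + a₁/2 else 3*a₁/2)
      = fun x => min (x + a₁/2) (3*a₁/2) := by
    funext x
    split_ifs with h
    · exact (min_eq_left (by linarith)).symm
    · exact (min_eq_right (by push_neg at h; linarith)).symm
  have hcont : Continuous fun x : ℝ => min (x + a₁/2) (3*a₁/2) :=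
    Continuous.min (by continuity) continuous_const
  have hlin : ∀ c : ℝ, 0 ≤ c → ∫ x in Set.Icc (0:ℝ) c, (x + a₁/2) = c^2/2 + c*a₁/2 := by
    intro c hcge
    rw [MeasureTheory.integral_Icc_eq_integral_Ioc, ← intervalIntegral.integral_of_le hcge]
    rw [intervalIntegral.integral_add intervalIntegral.intervalIntegrable_id
      (intervalIntegrable_const (c := a₁/2))]
    rw [integral_id, intervalIntegral.integral_const]
    simp only [smul_eq_mul]
    ring
  unfold Mfun
  by_cases h : a₀ ≤ a₁
  · rw [if_pos h]
    have : ∫ x in Set.Icc (0:ℝ) a₀, (if x ≤ a₁ then x + a₁/2 else 3*a₁/2)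
        = ∫ x in Set.Icc (0:ℝ) a₀, (x + a₁/2) := by
      apply setIntegral_congr_fun measurableSet_Icc
      intro x hxmem
      simp [hxmem.2.trans h]
    rw [this, hlin a₀ h0]; ring
  · push_neg at h
    rw [if_neg (not_le.mpr h)]
    have hsplit : Set.Icc (0:ℝ) a₀ = Set.Icc 0 a₁ ∪ Set.Ioc a₁ a₀ :=
      (Set.Icc_union_Ioc_eq_Icc h1 h.le).symm
    rw [hsplit, setIntegral_union]
    · have e1 : ∫ x in Set.Icc (0:ℝ) a₁, (if x ≤ a₁ then x + a₁/2 else 3*a₁/2)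
          = ∫ x in Set.Icc (0:ℝ) a₁, (x + a₁/2) := by
        apply setIntegral_congr_fun measurableSet_Icc
        intro x hxmem; simp [hxmem.2]
      have e2 : ∫ x in Set.Ioc a₁ a₀, (if x ≤ a₁ then x + a₁/2 else 3*a₁/2)
          = ∫ x in Set.Ioc a₁ a₀, (3*a₁/2 : ℝ) := by
        apply setIntegral_congr_fun measurableSet_Ioc
        intro x hxmem; simp [not_le.mpr hxmem.1]
      rw [e1, e2, hlin a₁ h1, setIntegral_const, Real.volume_real_Ioc_of_le h.le]
      simp only [smul_eq_mul]; ring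
    · exact Set.disjoint_left.mpr fun y hy1 hy2 => absurd hy2.1 (not_lt.mpr hy1.2)
    · exact measurableSet_Ioc
    · rw [hfun]; exact hcont.integrableOn_Icc
    · rw [hfun]; exact hcont.integrableOn_Ioc

lemma box_integral (a : Fin 2 → ℝ) (ha0 : 0 ≤ a 0) (ha1 : 0 ≤ a 1) :
    ∫ y in Set.Icc (0 : Fin 2 → ℝ) a, (if y 0 ≤ y 1 then (1:ℝ)/2 else 3/2)
      = Mfun (a 0) (a 1) := by
  set e := MeasurableEquiv.finTwoArrow (α := ℝ) with he
  have hmp : MeasurePreserving e.symm volume volume :=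
    (volume_preserving_finTwoArrow ℝ).symm
  rw [← hmp.setIntegral_preimage_emb e.symm.measurableEmbedding
    (fun y : Fin 2 → ℝ => if y 0 ≤ y 1 then (1:ℝ)/2 else 3/2) (Set.Icc 0 a)]
  have hpre : e.symm ⁻¹' (Set.Icc 0 a) = Set.Icc (0:ℝ) (a 0) ×ˢ Set.Icc (0:ℝ) (a 1) := by
    ext p
    simp [he, MeasurableEquiv.finTwoArrow, MeasurableEquiv.piFinTwo, Set.mem_Icc, Pi.le_def,
      Fin.forall_fin_two, Prod.le_def]
  have hfe : ∀ p : ℝ × ℝ, ((e.symm p : Fin 2 → ℝ) 0) = p.1 ∧ ((e.symm p : Fin 2 → ℝ) 1) = p.2 := by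
    intro p
    constructor <;> simp [he, MeasurableEquiv.finTwoArrow, MeasurableEquiv.piFinTwo]
  have hint : ∀ p : ℝ × ℝ, (if (e.symm p : Fin 2 → ℝ) 0 ≤ (e.symm p : Fin 2 → ℝ) 1
      then (1:ℝ)/2 else 3/2) = (if p.1 ≤ p.2 then (1:ℝ)/2 else 3/2) := by
    intro p; rw [(hfe p).1, (hfe p).2]
  rw [hpre]
  rw [show (fun p : ℝ × ℝ => if (e.symm p : Fin 2 → ℝ) 0 ≤ (e.symm p : Fin 2 → ℝ) 1
      then (1:ℝ)/2 else 3/2) = fun p : ℝ × ℝ => (if p.1 ≤ p.2 then (1:ℝ)/2 else 3/2)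
    from funext hint]
  have hmble : Measurable fun p : ℝ × ℝ => (if p.1 ≤ p.2 then (1:ℝ)/2 else 3/2) :=
    Measurable.ite (measurableSet_le measurable_fst measurable_snd)
      measurable_const measurable_const
  have hIntOn : IntegrableOn (fun p : ℝ × ℝ => (if p.1 ≤ p.2 then (1:ℝ)/2 else 3/2))
      (Set.Icc (0:ℝ) (a 0) ×ˢ Set.Icc (0:ℝ) (a 1)) volume := by
    apply Measure.integrableOn_of_bounded (M := 3/2)
    · exact ((isCompact_Icc.prod isCompact_Icc).measure_lt_top.ne)
    · exact hmble.aestronglyMeasurable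
    · exact Filter.Eventually.of_forall fun p => by
        dsimp; split <;> rw [abs_of_nonneg] <;> norm_num
  rw [MeasureTheory.Measure.volume_eq_prod ℝ ℝ] at hIntOn ⊢
  rw [setIntegral_prod _ hIntOn]
  have : ∀ x ∈ Set.Icc (0:ℝ) (a 0),
      ∫ y in Set.Icc (0:ℝ) (a 1), (if x ≤ y then (1:ℝ)/2 else 3/2)
        = (if x ≤ a 1 then x + (a 1)/2 else 3*(a 1)/2) := by
    intro x hx
    exact inner1d x (a 1) hx.1 ha1
  rw [setIntegral_congr_fun measurableSet_Icc this]
  exact outer1d (a 0) (a 1) ha0 ha1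

lemma g_measurable : Measurable fun y : Fin 2 → ℝ => (if y 0 ≤ y 1 then (1:ℝ)/2 else 3/2) :=
  Measurable.ite (measurableSet_le (measurable_pi_apply 0) (measurable_pi_apply 1))
    measurable_const measurable_const

lemma muG_box (a : Fin 2 → ℝ) (ha : a ∈ Set.Icc (0 : Fin 2 → ℝ) 1) :
    ((volume.restrict (Set.Icc (0 : Fin 2 → ℝ) 1)).withDensity
        (fun y => ENNReal.ofReal (if y 0 ≤ y 1 then (1:ℝ)/2 else 3/2))) (Set.Icc 0 a)
      = ENNReal.ofReal (Mfun (a 0) (a 1)) := by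
  rw [withDensity_apply _ measurableSet_Icc,
    Measure.restrict_restrict measurableSet_Icc,
    Set.inter_eq_self_of_subset_left (Set.Icc_subset_Icc_right ha.2)]
  have hInt : IntegrableOn (fun y : Fin 2 → ℝ => (if y 0 ≤ y 1 then (1:ℝ)/2 else 3/2))
      (Set.Icc 0 a) volume := by
    apply Measure.integrableOn_of_bounded (M := 3/2)
    · exact (isCompact_Icc.measure_lt_top.ne)
    · exact g_measurable.aestronglyMeasurable
    · exact Filter.Eventually.of_forall fun p => by
        dsimp; split <;> rw [abs_of_nonneg] <;> norm_num
  rw [← MeasureTheory.ofReal_integral_eq_lintegral_ofReal hInt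
    (Filter.Eventually.of_forall fun p => by dsimp; split <;> norm_num)]
  rw [box_integral a (ha.1 0) (ha.1 1)]

lemma sup_eq {ι : Sort*} [Nonempty ι] (F : ι → ℝ) (c : ℝ) (hub : ∀ i, F i ≤ c)
    (happrox : ∀ ε : ℝ, 0 < ε → ∃ i, c - ε ≤ F i) : (⨆ i, F i) = c := by
  have hbdd : BddAbove (Set.range F) := ⟨c, by rintro y ⟨i, rfl⟩; exact hub i⟩
  refine le_antisymm (ciSup_le hub) ?_
  refine le_of_forall_pos_le_add fun ε hε => ?_
  obtain ⟨i, hi⟩ := happrox ε hε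
  have := le_ciSup hbdd i
  linarith

lemma mem_box_iff (u v : ℝ) (a : Fin 2 → ℝ) (hu : 0 ≤ u) (hv : 0 ≤ v) :
    (![u, v] : Fin 2 → ℝ) ∈ Set.Icc 0 a ↔ u ≤ a 0 ∧ v ≤ a 1 := by
  constructor
  · intro hm
    exact ⟨by simpa using hm.2 0, by simpa using hm.2 1⟩
  · rintro ⟨h1, h2⟩
    refine ⟨fun i => ?_, fun i => ?_⟩ <;> fin_cases i <;> simp [hu, hv] <;> assumption

lemma mem_box01 (u v : ℝ) (hu : 0 ≤ u) (hu1 : u ≤ 1) (hv : 0 ≤ v) (hv1 : v ≤ 1) :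
    (![u, v] : Fin 2 → ℝ) ∈ Set.Icc (0 : Fin 2 → ℝ) 1 := by
  refine ⟨fun i => ?_, fun i => ?_⟩ <;> fin_cases i <;> simp [hu, hv] <;> assumption

open scoped Classical in
lemma starDisc_one (z : Fin 2 → ℝ) (μ : Measure (Fin 2 → ℝ)) (c : ℝ)
    (hub : ∀ a : Fin 2 → ℝ, a ∈ Set.Icc (0 : Fin 2 → ℝ) 1 →
      |(if z ∈ Set.Icc 0 a then (1:ℝ) else 0) - (μ (Set.Icc 0 a)).toReal| ≤ c)
    (happ : ∀ ε : ℝ, 0 < ε → ∃ a ∈ Set.Icc (0 : Fin 2 → ℝ) 1,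
      c - ε ≤ |(if z ∈ Set.Icc 0 a then (1:ℝ) else 0) - (μ (Set.Icc 0 a)).toReal|) :
    starDisc 1 (fun _ => z) μ = c := by
  haveI : Nonempty ↑(Set.Icc (0 : Fin 2 → ℝ) 1) := ⟨⟨0, Set.left_mem_Icc.mpr zero_le_one⟩⟩
  unfold starDisc
  have hreduce : ∀ a : ↑(Set.Icc (0 : Fin 2 → ℝ) 1),
      |(∑ n : Fin 1, Set.indicator (Set.Icc 0 (a : Fin 2 → ℝ)) (fun _ => (1:ℝ))
          ((fun _ => z) n)) / (1 : ℕ) - (μ (Set.Icc 0 (a : Fin 2 → ℝ))).toReal|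
      = |(if z ∈ Set.Icc 0 (a : Fin 2 → ℝ) then (1:ℝ) else 0)
          - (μ (Set.Icc 0 (a : Fin 2 → ℝ))).toReal| := by
    intro a; simp [Set.indicator_apply]
  calc (⨆ a : ↑(Set.Icc (0 : Fin 2 → ℝ) 1),
        |(∑ n : Fin 1, Set.indicator (Set.Icc 0 (a : Fin 2 → ℝ)) (fun _ => (1:ℝ))
          ((fun _ => z) n)) / (1 : ℕ) - (μ (Set.Icc 0 (a : Fin 2 → ℝ))).toReal|)
      = ⨆ a : ↑(Set.Icc (0 : Fin 2 → ℝ) 1),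
        |(if z ∈ Set.Icc 0 (a : Fin 2 → ℝ) then (1:ℝ) else 0)
          - (μ (Set.Icc 0 (a : Fin 2 → ℝ))).toReal| := by
        exact iSup_congr hreduce
    _ = c := by
        apply sup_eq
        · rintro ⟨a, ha⟩
          exact hub a ha
        · intro ε hε
          obtain ⟨a, ha, h⟩ := happ ε hε
          exact ⟨⟨a, ha⟩, h⟩

end Stmt19Aux

/-- Chelson's claimed invariance of the star-discrepancy under the Rosenblatt transformation
fails: an explicit two-dimensional counterexample. -/
theorem stmt19 (g : (Fin 2 → ℝ) → ℝ)
    (hg : g = fun y => if y 0 ≤ y 1 then 1 / 2 else 3 / 2)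
    (μG : Measure (Fin 2 → ℝ))
    (hμG : μG = (volume.restrict (Set.Icc (0 : Fin 2 → ℝ) 1)).withDensity
      fun y => ENNReal.ofReal (g y))
    (G₁ : ℝ → ℝ) (hG₁ : G₁ = fun y₁ => (μG (Set.Icc 0 ![y₁, 1])).toReal)
    (G₂ : ℝ → ℝ → ℝ)
    (hG₂ : G₂ = fun y₁ y₂ => (∫ u in (0 : ℝ)..y₂, g ![y₁, u]) / ∫ u in (0 : ℝ)..1, g ![y₁, u])
    (x z : Fin 2 → ℝ) (hx : x = ![56 / 81, 20 / 23]) (hz : z = ![7 / 9, 20 / 27]) :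
    (∀ y₁ ∈ Set.Icc (0 : ℝ) 1, G₁ y₁ = (y₁ ^ 2 + y₁) / 2) ∧
    (∀ y₁ ∈ Set.Icc (0 : ℝ) 1, ∀ y₂ ∈ Set.Icc (0 : ℝ) 1,
      G₂ y₁ y₂ = if y₁ ≤ y₂ then (y₂ + 2 * y₁) / (1 + 2 * y₁) else 3 * y₂ / (1 + 2 * y₁)) ∧
    G₁ (z 0) = x 0 ∧ G₂ (z 0) (z 1) = x 1 ∧
    starDisc 1 (fun _ => z) μG = 610 / 729 ∧
    starDisc 1 (fun _ => x) volume = 20 / 23 ∧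
    starDisc 1 (fun _ => z) μG ≠ starDisc 1 (fun _ => x) volume := by
  subst hg hμG hG₁ hG₂ hx hz
  have hbox : ∀ a : Fin 2 → ℝ, a ∈ Set.Icc (0 : Fin 2 → ℝ) 1 →
      (((volume.restrict (Set.Icc (0 : Fin 2 → ℝ) 1)).withDensity
        fun y => ENNReal.ofReal
          ((fun y : Fin 2 → ℝ => if y 0 ≤ y 1 then (1:ℝ)/2 else 3/2) y))
        (Set.Icc 0 a)).toReal = Stmt19Aux.Mfun (a 0) (a 1) := by
    intro a ha
    have := Stmt19Aux.muG_box a ha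
    simp only [] at this ⊢
    rw [this, ENNReal.toReal_ofReal (Stmt19Aux.Mfun_nonneg (ha.1 0) (ha.1 1))]
  have hA : ∀ y₁ ∈ Set.Icc (0:ℝ) 1,
      (((volume.restrict (Set.Icc (0 : Fin 2 → ℝ) 1)).withDensity
        fun y => ENNReal.ofReal
          ((fun y : Fin 2 → ℝ => if y 0 ≤ y 1 then (1:ℝ)/2 else 3/2) y))
        (Set.Icc 0 ![y₁, 1])).toReal = (y₁ ^ 2 + y₁) / 2 := by
    intro y₁ hy
    rw [hbox _ (Stmt19Aux.mem_box01 y₁ 1 hy.1 hy.2 zero_le_one le_rfl)]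
    have h0 : (![y₁, 1] : Fin 2 → ℝ) 0 = y₁ := rfl
    have h1 : (![y₁, 1] : Fin 2 → ℝ) 1 = 1 := rfl
    rw [h0, h1]
    unfold Stmt19Aux.Mfun
    rw [if_pos hy.2]
    ring
  have hB : ∀ y₁ ∈ Set.Icc (0:ℝ) 1, ∀ y₂ ∈ Set.Icc (0:ℝ) 1,
      (∫ u in (0:ℝ)..y₂, (fun y : Fin 2 → ℝ => if y 0 ≤ y 1 then (1:ℝ)/2 else 3/2) ![y₁, u]) /
        (∫ u in (0:ℝ)..1, (fun y : Fin 2 → ℝ => if y 0 ≤ y 1 then (1:ℝ)/2 else 3/2) ![y₁, u])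
      = if y₁ ≤ y₂ then (y₂ + 2*y₁) / (1 + 2*y₁) else 3*y₂ / (1 + 2*y₁) := by
    intro y₁ hy1 y₂ hy2
    have hfun : ∀ c : ℝ, 0 ≤ c →
        (∫ u in (0:ℝ)..c, (fun y : Fin 2 → ℝ => if y 0 ≤ y 1 then (1:ℝ)/2 else 3/2) ![y₁, u])
          = if y₁ ≤ c then y₁ + c/2 else 3*c/2 := by
      intro c hc
      rw [show (fun u : ℝ =>
          (fun y : Fin 2 → ℝ => if y 0 ≤ y 1 then (1:ℝ)/2 else 3/2) ![y₁, u])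
        = fun u : ℝ => (if y₁ ≤ u then (1:ℝ)/2 else 3/2) from funext fun u => by simp]
      exact Stmt19Aux.interval_g y₁ c hy1.1 hc
    rw [hfun y₂ hy2.1, hfun 1 zero_le_one, if_pos hy1.2]
    have hden : (1:ℝ) + 2*y₁ ≠ 0 := by nlinarith [hy1.1]
    have hden2 : y₁ + (1:ℝ)/2 ≠ 0 := by nlinarith [hy1.1]
    split_ifs with h
    · rw [div_eq_div_iff hden2 hden]; ring
    · rw [div_eq_div_iff hden2 hden]; ring
  have hd1 : starDisc 1 (fun _ => (![(7:ℝ)/9, 20/27] : Fin 2 → ℝ))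
      ((volume.restrict (Set.Icc (0 : Fin 2 → ℝ) 1)).withDensity
        fun y => ENNReal.ofReal
          ((fun y : Fin 2 → ℝ => if y 0 ≤ y 1 then (1:ℝ)/2 else 3/2) y)) = 610/729 := by
      apply Stmt19Aux.starDisc_one
      · intro a ha
        rw [hbox a ha]
        have h00 : (0:ℝ) ≤ a 0 := by simpa using ha.1 0
        have h01 : a 0 ≤ 1 := by simpa using ha.2 0
        have h10 : (0:ℝ) ≤ a 1 := by simpa using ha.1 1
        have h11 : a 1 ≤ 1 := by simpa using ha.2 1
        by_cases hm : (![(7:ℝ)/9, 20/27] : Fin 2 → ℝ) ∈ Set.Icc 0 a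
        · obtain ⟨hq1, hq2⟩ :=
            (Stmt19Aux.mem_box_iff (7/9) (20/27) a (by norm_num) (by norm_num)).mp hm
          rw [if_pos hm, abs_le]
          unfold Stmt19Aux.Mfun
          constructor
          · split_ifs with h
            · nlinarith [mul_nonneg (sub_nonneg.2 h01) (sub_nonneg.2 h11),
                mul_nonneg h00 h10]
            · push_neg at h
              nlinarith [mul_nonneg (sub_nonneg.2 h.le) h10,
                mul_nonneg (sub_nonneg.2 h01) (sub_nonneg.2 h11)]
          · split_ifs with h
            · nlinarith [mul_nonneg (sub_nonneg.2 hq1) (sub_nonneg.2 hq2),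
                sq_nonneg (a 0 - 7/9)]
            · push_neg at h
              nlinarith [mul_nonneg (sub_nonneg.2 h.le) h10,
                mul_nonneg (sub_nonneg.2 hq2) (sub_nonneg.2 hq2),
                sq_nonneg (a 1 - 20/27)]
        · have hq : ¬((7:ℝ)/9 ≤ a 0 ∧ (20:ℝ)/27 ≤ a 1) := fun h =>
            hm ((Stmt19Aux.mem_box_iff (7/9) (20/27) a (by norm_num) (by norm_num)).mpr h)
          rw [if_neg hm, zero_sub, abs_neg,
            abs_of_nonneg (Stmt19Aux.Mfun_nonneg h00 h10)]
          rcases not_and_or.mp hq with h7 | h20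
          · push_neg at h7
            unfold Stmt19Aux.Mfun
            split_ifs with h
            · nlinarith [mul_nonneg h00 (sub_nonneg.2 h11)]
            · push_neg at h
              nlinarith [mul_nonneg (sub_nonneg.2 h.le) (sub_nonneg.2 h.le),
                mul_nonneg (sub_nonneg.2 h.le) h10]
          · push_neg at h20
            unfold Stmt19Aux.Mfun
            split_ifs with h
            · nlinarith [mul_nonneg h00 h10, mul_nonneg (sub_nonneg.2 h) h10]
            · push_neg at h
              nlinarith [mul_nonneg (sub_nonneg.2 h01) h10,
                mul_nonneg (sub_nonneg.2 (le_of_lt h20)) (sub_nonneg.2 h11)]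
      · intro ε hε
        set δ : ℝ := min (ε/2) (1/3) with hδdef
        have hδpos : 0 < δ := lt_min (by linarith) (by norm_num)
        have hδle : δ ≤ ε/2 := min_le_left _ _
        have hδle3 : δ ≤ 1/3 := min_le_right _ _
        have hamem : (![1, 20/27 - δ] : Fin 2 → ℝ) ∈ Set.Icc (0 : Fin 2 → ℝ) 1 :=
          Stmt19Aux.mem_box01 1 (20/27 - δ) zero_le_one le_rfl (by linarith) (by linarith)
        refine ⟨![1, 20/27 - δ], hamem, ?_⟩
        have hnm : (![(7:ℝ)/9, 20/27] : Fin 2 → ℝ) ∉ Set.Icc 0 (![1, 20/27 - δ] : Fin 2 → ℝ) := by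
          intro hmem
          have h2 := ((Stmt19Aux.mem_box_iff (7/9) (20/27) _ (by norm_num) (by norm_num)).mp hmem).2
          have he1 : (![(1:ℝ), 20/27 - δ] : Fin 2 → ℝ) 1 = 20/27 - δ := rfl
          rw [he1] at h2
          linarith
        rw [if_neg hnm, hbox _ hamem]
        have he0 : (![(1:ℝ), 20/27 - δ] : Fin 2 → ℝ) 0 = 1 := rfl
        have he1 : (![(1:ℝ), 20/27 - δ] : Fin 2 → ℝ) 1 = 20/27 - δ := rfl
        rw [he0, he1]
        unfold Stmt19Aux.Mfun
        rw [if_neg (show ¬ (1:ℝ) ≤ 20/27 - δ by intro h; linarith)]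
        rw [zero_sub, abs_neg, abs_of_nonneg (by nlinarith)]
        nlinarith
  have hd2 : starDisc 1 (fun _ => (![(56:ℝ)/81, 20/23] : Fin 2 → ℝ)) volume = 20/23 := by
      have hvol : ∀ a : Fin 2 → ℝ, a ∈ Set.Icc (0 : Fin 2 → ℝ) 1 →
          (volume (Set.Icc 0 a)).toReal = a 0 * a 1 := by
        intro a ha
        rw [Real.volume_Icc_pi_toReal ha.1]
        rw [Fin.prod_univ_two]
        simp
      apply Stmt19Aux.starDisc_one
      · intro a ha
        rw [hvol a ha]
        have h00 : (0:ℝ) ≤ a 0 := by simpa using ha.1 0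
        have h01 : a 0 ≤ 1 := by simpa using ha.2 0
        have h10 : (0:ℝ) ≤ a 1 := by simpa using ha.1 1
        have h11 : a 1 ≤ 1 := by simpa using ha.2 1
        by_cases hm : (![(56:ℝ)/81, 20/23] : Fin 2 → ℝ) ∈ Set.Icc 0 a
        · obtain ⟨hq1, hq2⟩ :=
            (Stmt19Aux.mem_box_iff (56/81) (20/23) a (by norm_num) (by norm_num)).mp hm
          rw [if_pos hm, abs_le]
          constructor
          · nlinarith [mul_nonneg (sub_nonneg.2 hq1) (sub_nonneg.2 hq2)]
          · nlinarith [mul_nonneg h00 h10]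
        · have hq : ¬((56:ℝ)/81 ≤ a 0 ∧ (20:ℝ)/23 ≤ a 1) := fun h =>
            hm ((Stmt19Aux.mem_box_iff (56/81) (20/23) a (by norm_num) (by norm_num)).mpr h)
          rw [if_neg hm, zero_sub, abs_neg, abs_of_nonneg (mul_nonneg h00 h10)]
          rcases not_and_or.mp hq with h7 | h20
          · push_neg at h7
            nlinarith [mul_nonneg h00 (sub_nonneg.2 h11)]
          · push_neg at h20
            nlinarith [mul_nonneg h10 (sub_nonneg.2 h01)]
      · intro ε hε
        set δ : ℝ := min (ε/2) (1/3) with hδdef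
        have hδpos : 0 < δ := lt_min (by linarith) (by norm_num)
        have hδle : δ ≤ ε/2 := min_le_left _ _
        have hδle3 : δ ≤ 1/3 := min_le_right _ _
        have hamem : (![1, 20/23 - δ] : Fin 2 → ℝ) ∈ Set.Icc (0 : Fin 2 → ℝ) 1 :=
          Stmt19Aux.mem_box01 1 (20/23 - δ) zero_le_one le_rfl (by linarith) (by linarith)
        refine ⟨![1, 20/23 - δ], hamem, ?_⟩
        have hnm : (![(56:ℝ)/81, 20/23] : Fin 2 → ℝ) ∉ Set.Icc 0 (![1, 20/23 - δ] : Fin 2 → ℝ) := by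
          intro hmem
          have h2 := ((Stmt19Aux.mem_box_iff (56/81) (20/23) _ (by norm_num) (by norm_num)).mp hmem).2
          have he1 : (![(1:ℝ), 20/23 - δ] : Fin 2 → ℝ) 1 = 20/23 - δ := rfl
          rw [he1] at h2
          linarith
        rw [if_neg hnm, hvol _ hamem]
        have he0 : (![(1:ℝ), 20/23 - δ] : Fin 2 → ℝ) 0 = 1 := rfl
        have he1 : (![(1:ℝ), 20/23 - δ] : Fin 2 → ℝ) 1 = 20/23 - δ := rfl
        rw [he0, he1]
        rw [zero_sub, abs_neg, abs_of_nonneg (by nlinarith)]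
        nlinarith
  refine ⟨hA, hB, ?_, ?_, hd1, hd2, by rw [hd1, hd2]; norm_num⟩
  · -- G₁ (z 0) = x 0
    show (((volume.restrict (Set.Icc (0 : Fin 2 → ℝ) 1)).withDensity
        fun y => ENNReal.ofReal
          ((fun y : Fin 2 → ℝ => if y 0 ≤ y 1 then (1:ℝ)/2 else 3/2) y))
        (Set.Icc 0 ![(![(7:ℝ)/9, 20/27] : Fin 2 → ℝ) 0, 1])).toReal
      = (![(56:ℝ)/81, 20/23] : Fin 2 → ℝ) 0
    have h0 : (![(7:ℝ)/9, 20/27] : Fin 2 → ℝ) 0 = 7/9 := rfl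
    have hx0 : (![(56:ℝ)/81, 20/23] : Fin 2 → ℝ) 0 = 56/81 := rfl
    rw [h0, hx0, hA (7/9) (by norm_num)]
    norm_num
  · -- G₂ (z 0) (z 1) = x 1
    have h0 : (![(7:ℝ)/9, 20/27] : Fin 2 → ℝ) 0 = 7/9 := rfl
    have h1 : (![(7:ℝ)/9, 20/27] : Fin 2 → ℝ) 1 = 20/27 := rfl
    have hx1 : (![(56:ℝ)/81, 20/23] : Fin 2 → ℝ) 1 = 20/23 := rfl
    show (∫ u in (0:ℝ)..(![(7:ℝ)/9, 20/27] : Fin 2 → ℝ) 1,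
        (fun y : Fin 2 → ℝ => if y 0 ≤ y 1 then (1:ℝ)/2 else 3/2)
          ![(![(7:ℝ)/9, 20/27] : Fin 2 → ℝ) 0, u]) /
      (∫ u in (0:ℝ)..1,
        (fun y : Fin 2 → ℝ => if y 0 ≤ y 1 then (1:ℝ)/2 else 3/2)
          ![(![(7:ℝ)/9, 20/27] : Fin 2 → ℝ) 0, u])
      = (![(56:ℝ)/81, 20/23] : Fin 2 → ℝ) 1
    rw [h0, h1, hx1, hB (7/9) (by norm_num) (20/27) (by norm_num)]
    norm_num
end
end
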